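/- arXiv:1904.12173 — 4 statements merged into one kernel-verified Lean document; each statement's English description precedes it below -/
import Mathlib

section
/- Let n be an odd prime with n ≥ 5, and let A be the (n-1)×(n-1) matrix over ℚ with entries A_{ij} = ⟨ij/n⟩ for 1 ≤ i, j ≤ n-1. For each integer k with 1 ≤ k ≤ (n-3)/2, let x^{(k)} ∈ ℚ^{n-1} be the vector whose j-th coordinate is 1 if j = k or j = n-k, is -1 if j = (n-1)/2 or j = (n+1)/2, and is 0 otherwise. Then A·x^{(k)} = 0 for every such k. -/
lemma mod_pair (n a b c : ℕ) (hab : a + b = n) (h1 : ¬ n ∣ c * a) (h2 : ¬ n ∣ c * b) :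
    c * a % n + c * b % n = n := by
  have hn : 0 < n := by
    rcases Nat.eq_zero_or_pos n with h | h
    · subst h; simp at h1; omega
    · exact h
  have hs : c * a + c * b = c * n := by rw [← Nat.mul_add, hab]
  have hm1 : 0 < c * a % n := Nat.pos_of_ne_zero (fun h => h1 (Nat.dvd_of_mod_eq_zero h))
  have hm2 : 0 < c * b % n := Nat.pos_of_ne_zero (fun h => h2 (Nat.dvd_of_mod_eq_zero h))
  have hl1 : c * a % n < n := Nat.mod_lt _ hn
  have hl2 : c * b % n < n := Nat.mod_lt _ hn
  have h0 : (c * a % n + c * b % n) % n = 0 := by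
    rw [← Nat.add_mod, hs, Nat.mul_mod_left]
  obtain ⟨t, ht⟩ := Nat.dvd_of_mod_eq_zero h0
  have ht1 : t = 1 := by nlinarith
  subst ht1; omega

set_option maxHeartbeats 1000000 in
/-- For an odd prime `n ≥ 5`, let `A` be the `(n-1) × (n-1)` matrix over `ℚ` whose `(i,j)`
entry (for `1 ≤ i, j ≤ n-1`) is the fractional part `⟨ij/n⟩`. For each `1 ≤ k ≤ (n-3)/2`,
the vector `x^{(k)}` whose `j`-th coordinate is `1` if `j = k` or `j = n-k`, is `-1` if
`j = (n-1)/2` or `j = (n+1)/2`, and `0` otherwise, lies in the kernel of `A`. -/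
theorem stmt_1 (n : ℕ) (hn : n.Prime) (hodd : Odd n) (hn5 : 5 ≤ n)
    (A : Matrix (Fin (n - 1)) (Fin (n - 1)) ℚ)
    (hA : ∀ i j : Fin (n - 1),
      A i j = Int.fract ((((i.val + 1) * (j.val + 1) : ℕ) : ℚ) / (n : ℚ)))
    (k : ℕ) (hk1 : 1 ≤ k) (hk2 : k ≤ (n - 3) / 2)
    (x : Fin (n - 1) → ℚ)
    (hx : ∀ j : Fin (n - 1),
      x j = if j.val + 1 = k ∨ j.val + 1 = n - k then 1
        else if j.val + 1 = (n - 1) / 2 ∨ j.val + 1 = (n + 1) / 2 then -1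
        else 0) :
    A.mulVec x = 0 := by
  obtain ⟨m, hm⟩ := hodd
  have hm2 : 2 ≤ m := by omega
  -- the four special indices
  have hb1 : k - 1 < n - 1 := by omega
  have hb2 : n - k - 1 < n - 1 := by omega
  have hb3 : m - 1 < n - 1 := by omega
  have hb4 : m < n - 1 := by omega
  set j1 : Fin (n - 1) := ⟨k - 1, hb1⟩ with hj1
  set j2 : Fin (n - 1) := ⟨n - k - 1, hb2⟩ with hj2
  set j3 : Fin (n - 1) := ⟨m - 1, hb3⟩ with hj3
  set j4 : Fin (n - 1) := ⟨m, hb4⟩ with hj4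
  have hx' : ∀ j, x j = (if j = j1 then 1 else 0) + (if j = j2 then 1 else 0)
      - (if j = j3 then 1 else 0) - (if j = j4 then 1 else 0) := by
    intro j
    rw [hx j]
    have e1 : (j = j1) ↔ j.val + 1 = k := by rw [Fin.ext_iff]; simp [hj1]; omega
    have e2 : (j = j2) ↔ j.val + 1 = n - k := by rw [Fin.ext_iff]; simp [hj2]; omega
    have e3 : (j = j3) ↔ j.val + 1 = (n - 1) / 2 := by rw [Fin.ext_iff]; simp [hj3]; omega
    have e4 : (j = j4) ↔ j.val + 1 = (n + 1) / 2 := by rw [Fin.ext_iff]; simp [hj4]; omega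
    simp only [e1, e2, e3, e4]
    have hjb := j.isLt
    split_ifs <;> first | (exfalso; omega) | norm_num
  funext i
  simp only [Matrix.mulVec, dotProduct, Pi.zero_apply]
  calc ∑ j, A i j * x j
      = ∑ j, (A i j * (if j = j1 then 1 else 0) + A i j * (if j = j2 then 1 else 0)
        - A i j * (if j = j3 then 1 else 0) - A i j * (if j = j4 then 1 else 0)) := by
        refine Finset.sum_congr rfl fun j _ => ?_
        rw [hx' j]; ring
    _ = A i j1 + A i j2 - A i j3 - A i j4 := by
        have hone : ∀ jj : Fin (n - 1), (∑ j, A i j * (if j = jj then 1 else 0)) = A i jj := by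
          intro jj
          rw [Finset.sum_congr rfl (fun j _ => by rw [mul_ite, mul_one, mul_zero]),
            Finset.sum_ite_eq' Finset.univ jj (fun j => A i j)]
          simp
        rw [Finset.sum_sub_distrib, Finset.sum_sub_distrib, Finset.sum_add_distrib,
          hone j1, hone j2, hone j3, hone j4]
    _ = 0 := by
        rw [hA i j1, hA i j2, hA i j3, hA i j4]
        have v1 : j1.val + 1 = k := by simp [hj1]; omega
        have v2 : j2.val + 1 = n - k := by simp [hj2]; omega
        have v3 : j3.val + 1 = m := by simp [hj3]; omega
        have v4 : j4.val + 1 = m + 1 := by simp [hj4]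
        rw [v1, v2, v3, v4]
        set c := i.val + 1 with hc
        have hic : 0 < c ∧ c < n := ⟨by omega, by have := i.isLt; omega⟩
        have hndc : ¬ n ∣ c := fun h => by have := Nat.le_of_dvd hic.1 h; omega
        have nd : ∀ a : ℕ, 0 < a → a < n → ¬ n ∣ c * a := by
          intro a ha1 ha2 h
          rcases (Nat.Prime.dvd_mul hn).1 h with h' | h'
          · exact hndc h'
          · have := Nat.le_of_dvd ha1 h'; omega
        have h12 : c * k % n + c * (n - k) % n = n :=
          mod_pair n k (n - k) c (by omega) (nd k (by omega) (by omega))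
            (nd (n - k) (by omega) (by omega))
        have h34 : c * m % n + c * (m + 1) % n = n :=
          mod_pair n m (m + 1) c (by omega) (nd m (by omega) (by omega))
            (nd (m + 1) (by omega) (by omega))
        rw [Int.fract_div_natCast_eq_div_natCast_mod, Int.fract_div_natCast_eq_div_natCast_mod,
          Int.fract_div_natCast_eq_div_natCast_mod, Int.fract_div_natCast_eq_div_natCast_mod]
        have hcast : ((c * k % n : ℕ) : ℚ) + ((c * (n - k) % n : ℕ) : ℚ)
            = ((c * m % n : ℕ) : ℚ) + ((c * (m + 1) % n : ℕ) : ℚ) := by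
          exact_mod_cast h12.trans h34.symm
        rw [← add_div, ← sub_div, ← sub_div, div_eq_zero_iff]
        left
        linarith
end

section
/- Fix a finite field 𝔽_q and a prime p ≥ 3, and for real s > 1 and monic irreducible Q ∈ 𝔽_q[x] let Z_Q(s) = (1 + ∑_{i=0}^{p-3} |Q|^{(i+1)-(i+2)s} - ∑_{i=0}^{p-2} |Q|^{i-(i+2)s}) / (1 - |Q|^{(p-1)-ps}). Then there exists a positive real number L such that (s-1)^{p-1} · ∏_Q Z_Q(s) tends to L as s → 1 from the right (the product over monic irreducible Q being convergent for each s > 1). In other words, the Dirichlet series counting Artin–Schreier covers has a pole of order exactly p-1 at s = 1. -/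
open Polynomial Filter Topology Real

namespace AS13

variable {Fq : Type*} [Field Fq] [Fintype Fq]

noncomputable local instance : DecidableEq Fq[X] := Classical.decEq _

set_option linter.unusedSectionVars false

/-- the canonical monic polynomial of degree `n` with prescribed lower coefficients -/
noncomputable def psi (n : ℕ) (a : Fin n → Fq) : Fq[X] :=
  X ^ n + ∑ i : Fin n, C (a i) * X ^ (i : ℕ)

lemma degree_sum_lt (n : ℕ) (a : Fin n → Fq) :
    (∑ i : Fin n, C (a i) * X ^ (i : ℕ)).degree < (n : WithBot ℕ) := by
  rcases Nat.eq_zero_or_pos n with h | h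
  · subst h; simp
  refine lt_of_le_of_lt (degree_sum_le _ _) ?_
  rw [Finset.sup_lt_iff (by exact_mod_cast WithBot.bot_lt_coe n)]
  intro i _
  refine lt_of_le_of_lt (degree_C_mul_X_pow_le _ _) ?_
  exact_mod_cast i.isLt

lemma psi_monic (n : ℕ) (a : Fin n → Fq) : (psi n a).Monic :=
  monic_X_pow_add (degree_sum_lt n a)

lemma psi_natDegree (n : ℕ) (a : Fin n → Fq) : (psi n a).natDegree = n := by
  rcases Nat.eq_zero_or_pos n with h | h
  · subst h
    simp [psi]
  have hdeg : (psi n a).degree = n := by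
    rw [psi, degree_add_eq_left_of_degree_lt, degree_X_pow]
    rw [degree_X_pow]; exact degree_sum_lt n a
  exact natDegree_eq_of_degree_eq_some hdeg

lemma psi_coeff (n : ℕ) (a : Fin n → Fq) {j : ℕ} (hj : j < n) :
    (psi n a).coeff j = a ⟨j, hj⟩ := by
  rw [psi, coeff_add, coeff_X_pow, if_neg (by omega), finset_sum_coeff]
  rw [Finset.sum_eq_single (⟨j, hj⟩ : Fin n)]
  · simp [coeff_C_mul, coeff_X_pow]
  · intro i _ hij
    have : j ≠ (i : ℕ) := fun h => hij (Fin.ext h.symm)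
    simp [coeff_C_mul, coeff_X_pow, this]
  · simp

lemma psi_injective (n : ℕ) : Function.Injective (psi (Fq := Fq) n) := by
  intro a b hab
  funext i
  have := congrArg (fun f => Polynomial.coeff f (i : ℕ)) hab
  simpa [psi_coeff n a i.isLt, psi_coeff n b i.isLt] using this

lemma eq_psi_of_monic {f : Fq[X]} {n : ℕ} (hf : f.Monic) (hdeg : f.natDegree = n) :
    f = psi n fun i => f.coeff (i : ℕ) := by
  ext j
  rcases lt_trichotomy j n with h | h | h
  · rw [psi_coeff n _ h]
  · subst h; subst hdeg
    have h1 : (psi f.natDegree fun i => f.coeff (i : ℕ)).coeff f.natDegree = 1 := by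
      have h2 := (psi_monic f.natDegree fun i => f.coeff (i : ℕ)).coeff_natDegree
      rwa [psi_natDegree] at h2
    rw [hf.coeff_natDegree, h1]
  · rw [coeff_eq_zero_of_natDegree_lt (by omega : f.natDegree < j),
      coeff_eq_zero_of_natDegree_lt (by rw [psi_natDegree]; omega)]

/-- the finset of monic polynomials of degree exactly `n` -/
noncomputable def MD (Fq : Type*) [Field Fq] [Fintype Fq] (n : ℕ) : Finset Fq[X] :=
  (Finset.univ : Finset (Fin n → Fq)).image (psi n)

lemma mem_MD {f : Fq[X]} {n : ℕ} : f ∈ MD Fq n ↔ f.Monic ∧ f.natDegree = n := by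
  constructor
  · rintro hf
    obtain ⟨a, -, rfl⟩ := Finset.mem_image.mp hf
    exact ⟨psi_monic n a, psi_natDegree n a⟩
  · rintro ⟨hm, hd⟩
    exact Finset.mem_image.mpr ⟨_, Finset.mem_univ _, (eq_psi_of_monic hm hd).symm⟩

lemma sum_MD (n : ℕ) (c : ℝ) :
    ∑ f ∈ MD Fq n, c ^ f.natDegree = ((Fintype.card Fq : ℝ) * c) ^ n := by
  rw [MD, Finset.sum_image (fun a _ b _ h => psi_injective n h)]
  simp only [psi_natDegree]
  rw [Finset.sum_const, Finset.card_univ, mul_pow]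
  simp [Fintype.card_fun, nsmul_eq_mul]

/-- the finset of monic polynomials of degree at most `N` -/
noncomputable def Tset (Fq : Type*) [Field Fq] [Fintype Fq] (N : ℕ) : Finset Fq[X] :=
  (Finset.range (N + 1)).biUnion (MD Fq)

lemma mem_Tset {f : Fq[X]} {N : ℕ} : f ∈ Tset Fq N ↔ f.Monic ∧ f.natDegree ≤ N := by
  simp only [Tset, Finset.mem_biUnion, Finset.mem_range, mem_MD]
  constructor
  · rintro ⟨n, hn, hm, rfl⟩; exact ⟨hm, by omega⟩
  · rintro ⟨hm, hd⟩; exact ⟨f.natDegree, by omega, hm, rfl⟩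

lemma sum_Tset (N : ℕ) (c : ℝ) :
    ∑ f ∈ Tset Fq N, c ^ f.natDegree
      = ∑ n ∈ Finset.range (N + 1), ((Fintype.card Fq : ℝ) * c) ^ n := by
  rw [Tset, Finset.sum_biUnion]
  · exact Finset.sum_congr rfl fun n _ => sum_MD n c
  · intro i _ j _ hij
    simp only [Finset.disjoint_left]
    intro f hfi hfj
    exact hij ((mem_MD.mp hfi).2 ▸ (mem_MD.mp hfj).2.symm ▸ rfl)

lemma geom_sum_le_inv {r : ℝ} (h0 : 0 ≤ r) (h1 : r < 1) (m : ℕ) :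
    ∑ n ∈ Finset.range m, r ^ n ≤ (1 - r)⁻¹ := by
  rw [← tsum_geometric_of_lt_one h0 h1]
  exact (summable_geometric_of_lt_one h0 h1).sum_le_tsum _ (fun i _ => pow_nonneg h0 i)

/-- key counting bound : for any finset `T` of monic polynomials -/
lemma sum_w_le {c : ℝ} (hc : 0 ≤ c) (hqc : (Fintype.card Fq : ℝ) * c < 1)
    (T : Finset Fq[X]) (hT : ∀ f ∈ T, f.Monic) :
    ∑ f ∈ T, c ^ f.natDegree ≤ (1 - (Fintype.card Fq : ℝ) * c)⁻¹ := by
  have hsub : T ⊆ Tset Fq (T.sup Polynomial.natDegree) := by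
    intro f hf
    exact mem_Tset.mpr ⟨hT f hf, Finset.le_sup hf⟩
  calc ∑ f ∈ T, c ^ f.natDegree ≤ ∑ f ∈ Tset Fq (T.sup Polynomial.natDegree), c ^ f.natDegree :=
        Finset.sum_le_sum_of_subset_of_nonneg hsub (fun f _ _ => pow_nonneg hc _)
    _ = ∑ n ∈ Finset.range (T.sup Polynomial.natDegree + 1), ((Fintype.card Fq : ℝ) * c) ^ n :=
        sum_Tset _ c
    _ ≤ _ := geom_sum_le_inv (by positivity) hqc _

section Factorization

open UniqueFactorizationMonoid

noncomputable local instance : DecidableEq Fq := Classical.decEq _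

/-- the type of monic irreducible polynomials -/
abbrev PP (Fq : Type*) [Field Fq] : Type _ := {Q : Fq[X] // Q.Monic ∧ Irreducible Q}

lemma PP.natDegree_pos (Q : PP Fq) : 0 < Q.1.natDegree :=
  natDegree_pos_iff_degree_pos.mpr (degree_pos_of_irreducible Q.2.2)

lemma nf_prod_pow {γ : Type*} (s : Finset γ) (g : γ → Fq[X])
    (hg : ∀ i ∈ s, (g i).Monic ∧ Irreducible (g i)) (k : γ → ℕ) :
    normalizedFactors (∏ i ∈ s, g i ^ k i) = ∑ i ∈ s, k i • ({g i} : Multiset Fq[X]) := by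
  classical
  induction s using Finset.induction with
  | empty => simp
  | @insert a s' ha ih =>
      have hga := hg a (Finset.mem_insert_self a s')
      have h1 : (g a ^ k a) ≠ 0 := (hga.1.pow _).ne_zero
      have h2 : (∏ i ∈ s', g i ^ k i) ≠ 0 :=
        (monic_prod_of_monic _ _ fun i hi =>
          ((hg i (Finset.mem_insert_of_mem hi)).1.pow _)).ne_zero
      rw [Finset.prod_insert ha, Finset.sum_insert ha,
        normalizedFactors_mul h1 h2, normalizedFactors_pow,
        normalizedFactors_irreducible hga.2, hga.1.normalize_eq_self,
        ih fun i hi => hg i (Finset.mem_insert_of_mem hi)]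

lemma count_nf_prod_pow (B : Finset (PP Fq)) (k : ∀ a : PP Fq, a ∈ B → ℕ)
    {Q : PP Fq} (hQ : Q ∈ B) :
    Multiset.count Q.1
      (normalizedFactors (∏ x ∈ B.attach, x.1.1 ^ k x.1 x.2)) = k Q hQ := by
  classical
  rw [nf_prod_pow _ _ (fun x _ => x.1.2) _, Multiset.count_sum']
  rw [Finset.sum_eq_single (⟨Q, hQ⟩ : {x // x ∈ B})]
  · simp
  · intro b _ hb
    have : Q.1 ≠ b.1.1 := by
      intro h
      exact hb (by ext1; exact (Subtype.ext h.symm))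
    simp [Multiset.count_nsmul, Multiset.count_singleton, this]
  · intro h; exact absurd (Finset.mem_attach _ _) h

lemma Phi_injOn (B : Finset (PP Fq)) (t : Finset ℕ) :
    ∀ e ∈ B.pi (fun _ => t), ∀ d ∈ B.pi (fun _ => t),
      (∏ x ∈ B.attach, x.1.1 ^ e x.1 x.2) = (∏ x ∈ B.attach, x.1.1 ^ d x.1 x.2) → e = d := by
  intro e _ d _ h
  funext a ha
  have h2 := congrArg (fun m => Multiset.count a.1 (normalizedFactors m)) h
  simpa [count_nf_prod_pow B _ ha] using h2

lemma monic_of_mem_nf {f x : Fq[X]} (hx : x ∈ normalizedFactors f) : x.Monic := by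
  have h0 : x ≠ 0 := (irreducible_of_normalized_factor x hx).ne_zero
  have := monic_normalize (p := x) h0
  rwa [normalize_normalized_factor x hx] at this

lemma nf_prod_monic {f : Fq[X]} (hf : f.Monic) : (normalizedFactors f).prod = f := by
  have hm : ((normalizedFactors f).map id).prod.Monic :=
    monic_multiset_prod_of_monic _ id fun x hx => monic_of_mem_nf hx
  rw [Multiset.map_id] at hm
  exact eq_of_monic_of_associated hm hf (prod_normalizedFactors hf.ne_zero)

lemma card_le_sum_of_one_le (t : Multiset ℕ) (h : ∀ x ∈ t, 1 ≤ x) :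
    Multiset.card t ≤ t.sum := by
  induction t using Multiset.induction with
  | empty => simp
  | cons a s ih =>
      simp only [Multiset.card_cons, Multiset.sum_cons]
      have := h a (Multiset.mem_cons_self a s)
      have := ih fun x hx => h x (Multiset.mem_cons_of_mem hx)
      omega

lemma card_nf_le {f : Fq[X]} (hf : f.Monic) :
    Multiset.card (normalizedFactors f) ≤ f.natDegree := by
  have h1 : f.natDegree = ((normalizedFactors f).map natDegree).sum := by
    conv_lhs => rw [← nf_prod_monic hf]
    exact natDegree_multiset_prod _ fun h =>
      (irreducible_of_normalized_factor 0 h).ne_zero rfl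
  rw [h1, ← Multiset.card_map natDegree]
  refine card_le_sum_of_one_le _ fun x hx => ?_
  obtain ⟨y, hy, rfl⟩ := Multiset.mem_map.mp hx
  exact natDegree_pos_iff_degree_pos.mpr
    (degree_pos_of_irreducible (irreducible_of_normalized_factor y hy))

lemma exists_pi_eq (N : ℕ) {f : Fq[X]} (hf : f.Monic) (hdeg : f.natDegree ≤ N)
    (B : Finset (PP Fq)) (hB : ∀ Q : PP Fq, Q.1.natDegree ≤ N → Q ∈ B) :
    ∃ e ∈ B.pi (fun _ => Finset.range (N + 1)),
      (∏ x ∈ B.attach, x.1.1 ^ e x.1 x.2) = f := by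
  classical
  refine ⟨fun a _ => Multiset.count a.1 (normalizedFactors f), ?_, ?_⟩
  · rw [Finset.mem_pi]
    intro a _
    rw [Finset.mem_range]
    have h1 := Multiset.count_le_card a.1 (normalizedFactors f)
    have h2 := card_nf_le hf
    omega
  · have hsub : (normalizedFactors f).toFinset ⊆ B.image Subtype.val := by
      intro x hx
      rw [Multiset.mem_toFinset] at hx
      have hxm : x.Monic := monic_of_mem_nf hx
      have hxi : Irreducible x := irreducible_of_normalized_factor x hx
      have hxd : x.natDegree ≤ N :=
        le_trans (natDegree_le_of_dvd (dvd_of_mem_normalizedFactors hx) hf.ne_zero) hdeg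
      exact Finset.mem_image.mpr ⟨⟨x, hxm, hxi⟩, hB _ hxd, rfl⟩
    calc (∏ x ∈ B.attach, x.1.1 ^ Multiset.count x.1.1 (normalizedFactors f))
        = ∏ Q ∈ B, Q.1 ^ Multiset.count Q.1 (normalizedFactors f) := by
          exact Finset.prod_attach B fun Q => Q.1 ^ Multiset.count Q.1 (normalizedFactors f)
      _ = ∏ a ∈ B.image Subtype.val, a ^ Multiset.count a (normalizedFactors f) := by
          rw [Finset.prod_image (fun x _ y _ h => Subtype.ext h)]
      _ = (normalizedFactors f).prod :=
          (Finset.prod_multiset_count_of_subset _ _ hsub).symm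
      _ = f := nf_prod_monic hf

lemma c_pow_natDegree_prod (c : ℝ) {γ : Type*} (s : Finset γ) (g : γ → Fq[X])
    (hg : ∀ i ∈ s, (g i).Monic) :
    c ^ (∏ i ∈ s, g i).natDegree = ∏ i ∈ s, c ^ (g i).natDegree := by
  classical
  induction s using Finset.induction with
  | empty => simp
  | @insert a s' ha ih =>
      rw [Finset.prod_insert ha, Finset.prod_insert ha,
        natDegree_mul (hg a (Finset.mem_insert_self a s')).ne_zero
          (monic_prod_of_monic _ _ fun i hi =>
            hg i (Finset.mem_insert_of_mem hi)).ne_zero,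
        pow_add, ih fun i hi => hg i (Finset.mem_insert_of_mem hi)]

lemma prod_geom_eq (c : ℝ) (B : Finset (PP Fq)) (K : ℕ) :
    ∏ Q ∈ B, (∑ k ∈ Finset.range (K + 1), (c ^ Q.1.natDegree) ^ k)
      = ∑ e ∈ B.pi (fun _ => Finset.range (K + 1)),
          c ^ (∏ x ∈ B.attach, x.1.1 ^ e x.1 x.2).natDegree := by
  classical
  rw [Finset.prod_sum]
  refine Finset.sum_congr rfl fun e _ => ?_
  rw [c_pow_natDegree_prod c _ _ (fun x _ => x.1.2.1.pow _)]
  refine Finset.prod_congr rfl fun x _ => ?_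
  rw [natDegree_pow, pow_mul']

end Factorization

section Euler

variable {c : ℝ}

lemma two_le_q : (2 : ℝ) ≤ (Fintype.card Fq : ℝ) := by
  exact_mod_cast Fintype.one_lt_card

lemma c_lt_one (hc : 0 < c) (hqc : (Fintype.card Fq : ℝ) * c < 1) : c < 1 := by
  nlinarith [two_le_q (Fq := Fq)]

lemma x_le_c (hc : 0 < c) (hc1 : c < 1) (Q : PP Fq) : c ^ Q.1.natDegree ≤ c := by
  calc c ^ Q.1.natDegree ≤ c ^ 1 :=
        pow_le_pow_of_le_one hc.le hc1.le (PP.natDegree_pos Q)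
    _ = c := pow_one c

lemma one_sub_x_pos (hc : 0 < c) (hc1 : c < 1) (Q : PP Fq) :
    0 < 1 - c ^ Q.1.natDegree :=
  sub_pos.mpr (lt_of_le_of_lt (x_le_c hc hc1 Q) hc1)

lemma one_le_factor (hc : 0 < c) (hc1 : c < 1) (Q : PP Fq) :
    1 ≤ (1 - c ^ Q.1.natDegree)⁻¹ := by
  rw [le_inv_comm₀ one_pos (one_sub_x_pos hc hc1 Q)]
  have := pow_pos hc Q.1.natDegree
  linarith

lemma prod_partial_le (hc : 0 < c) (hqc : (Fintype.card Fq : ℝ) * c < 1)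
    (B : Finset (PP Fq)) :
    ∏ Q ∈ B, (1 - c ^ Q.1.natDegree)⁻¹ ≤ (1 - (Fintype.card Fq : ℝ) * c)⁻¹ := by
  classical
  have hc1 := c_lt_one hc hqc
  have htend : Tendsto
      (fun K => ∏ Q ∈ B, ∑ k ∈ Finset.range (K + 1), (c ^ Q.1.natDegree) ^ k) atTop
      (𝓝 (∏ Q ∈ B, (1 - c ^ Q.1.natDegree)⁻¹)) := by
    refine tendsto_finset_prod _ fun Q _ => ?_
    have hs := hasSum_geometric_of_lt_one (pow_nonneg hc.le _)
      (lt_of_le_of_lt (x_le_c hc hc1 Q) hc1)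
    exact hs.tendsto_sum_nat.comp (tendsto_add_atTop_nat 1)
  refine le_of_tendsto htend (Eventually.of_forall fun K => ?_)
  have him : ∑ e ∈ B.pi (fun _ => Finset.range (K + 1)),
        c ^ (∏ x ∈ B.attach, x.1.1 ^ e x.1 x.2).natDegree
      = ∑ g ∈ (B.pi (fun _ => Finset.range (K + 1))).image
          (fun e => ∏ x ∈ B.attach, x.1.1 ^ e x.1 x.2), c ^ g.natDegree :=
    (Finset.sum_image (f := fun g : Fq[X] => c ^ g.natDegree) (Phi_injOn B _)).symm
  rw [prod_geom_eq, him]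
  refine sum_w_le hc.le hqc _ fun f hf => ?_
  obtain ⟨e, _, rfl⟩ := Finset.mem_image.mp hf
  exact monic_prod_of_monic _ _ fun x _ => x.1.2.1.pow _

lemma hasProd_euler (hc : 0 < c) (hqc : (Fintype.card Fq : ℝ) * c < 1) :
    HasProd (fun Q : PP Fq => (1 - c ^ Q.1.natDegree)⁻¹)
      (1 - (Fintype.card Fq : ℝ) * c)⁻¹ := by
  classical
  have hc1 := c_lt_one hc hqc
  set f : PP Fq → ℝ := fun Q => (1 - c ^ Q.1.natDegree)⁻¹ with hf
  have hmono : Monotone (fun B : Finset (PP Fq) => ∏ Q ∈ B, f Q) := by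
    intro B B' h
    show ∏ Q ∈ B, f Q ≤ ∏ Q ∈ B', f Q
    rw [← Finset.prod_sdiff h]
    have h1 : (1 : ℝ) ≤ ∏ Q ∈ B' \ B, f Q := by
      calc (1 : ℝ) = ∏ _Q ∈ B' \ B, (1 : ℝ) := (Finset.prod_const_one).symm
        _ ≤ _ := Finset.prod_le_prod (fun _ _ => zero_le_one)
            (fun Q _ => one_le_factor hc hc1 Q)
    have h2 : (0 : ℝ) ≤ ∏ Q ∈ B, f Q :=
      Finset.prod_nonneg fun Q _ =>
        le_of_lt (inv_pos.mpr (one_sub_x_pos hc hc1 Q))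
    exact le_mul_of_one_le_left h2 h1
  have hbdd : BddAbove (Set.range fun B : Finset (PP Fq) => ∏ Q ∈ B, f Q) := by
    refine ⟨(1 - (Fintype.card Fq : ℝ) * c)⁻¹, ?_⟩
    rintro x ⟨B, rfl⟩
    exact prod_partial_le hc hqc B
  have hT : Tendsto (fun B : Finset (PP Fq) => ∏ Q ∈ B, f Q) atTop
      (𝓝 (⨆ B : Finset (PP Fq), ∏ Q ∈ B, f Q)) := tendsto_atTop_ciSup hmono hbdd
  suffices h : (⨆ B : Finset (PP Fq), ∏ Q ∈ B, f Q)
      = (1 - (Fintype.card Fq : ℝ) * c)⁻¹ by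
    rw [← h]; exact hT
  refine le_antisymm (ciSup_le fun B => prod_partial_le hc hqc B) ?_
  have hgeo : Tendsto
      (fun N => ∑ n ∈ Finset.range (N + 1), ((Fintype.card Fq : ℝ) * c) ^ n) atTop
      (𝓝 ((1 - (Fintype.card Fq : ℝ) * c)⁻¹)) :=
    (hasSum_geometric_of_lt_one (by positivity) hqc).tendsto_sum_nat.comp
      (tendsto_add_atTop_nat 1)
  refine le_of_tendsto hgeo (Eventually.of_forall fun N => ?_)
  set A : Finset (PP Fq) := (Tset Fq N).subtype (fun g => g.Monic ∧ Irreducible g) with hA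
  have hAmem : ∀ Q : PP Fq, Q.1.natDegree ≤ N → Q ∈ A := by
    intro Q h
    rw [hA, Finset.mem_subtype]
    exact mem_Tset.mpr ⟨Q.2.1, h⟩
  have hsub : Tset Fq N ⊆ (A.pi (fun _ => Finset.range (N + 1))).image
      (fun e => ∏ x ∈ A.attach, x.1.1 ^ e x.1 x.2) := by
    intro g hg
    obtain ⟨e, he, hΦ⟩ :=
      exists_pi_eq N (mem_Tset.mp hg).1 (mem_Tset.mp hg).2 A hAmem
    exact Finset.mem_image.mpr ⟨e, he, hΦ⟩
  calc ∑ n ∈ Finset.range (N + 1), ((Fintype.card Fq : ℝ) * c) ^ n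
      = ∑ g ∈ Tset Fq N, c ^ g.natDegree := (sum_Tset N c).symm
    _ ≤ ∑ g ∈ (A.pi (fun _ => Finset.range (N + 1))).image
          (fun e => ∏ x ∈ A.attach, x.1.1 ^ e x.1 x.2), c ^ g.natDegree :=
        Finset.sum_le_sum_of_subset_of_nonneg hsub fun g _ _ => pow_nonneg hc.le _
    _ = ∑ e ∈ A.pi (fun _ => Finset.range (N + 1)),
          c ^ (∏ x ∈ A.attach, x.1.1 ^ e x.1 x.2).natDegree :=
        Finset.sum_image (Phi_injOn A _)
    _ = ∏ Q ∈ A, (∑ k ∈ Finset.range (N + 1), (c ^ Q.1.natDegree) ^ k) :=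
        (prod_geom_eq c A N).symm
    _ ≤ ∏ Q ∈ A, f Q := by
        refine Finset.prod_le_prod (fun Q _ => ?_) (fun Q _ => ?_)
        · refine Finset.sum_nonneg fun k _ => pow_nonneg (pow_nonneg hc.le _) _
        · exact geom_sum_le_inv (pow_nonneg hc.le _)
            (lt_of_le_of_lt (x_le_c hc hc1 Q) hc1) _
    _ ≤ _ := le_ciSup hbdd A

lemma summable_pow_deg (hc : 0 ≤ c) (hqc : (Fintype.card Fq : ℝ) * c < 1) :
    Summable (fun Q : PP Fq => c ^ Q.1.natDegree) := by
  classical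
  refine summable_of_sum_le (c := (1 - (Fintype.card Fq : ℝ) * c)⁻¹)
    (fun Q => pow_nonneg hc _) (fun B => ?_)
  have : ∑ Q ∈ B, c ^ Q.1.natDegree
      = ∑ g ∈ B.image Subtype.val, c ^ g.natDegree := by
    rw [Finset.sum_image (fun x _ y _ h => Subtype.ext h)]
  rw [this]
  refine sum_w_le hc hqc _ fun g hg => ?_
  obtain ⟨Q, _, rfl⟩ := Finset.mem_image.mp hg
  exact Q.2.1

end Euler

section Analysis

/-- generic Weierstrass-type product bounds -/
lemma prod_one_sub_bounds {ι : Type*} (F : Finset ι) (v : ι → ℝ)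
    (h0 : ∀ i ∈ F, 0 ≤ v i) (h1 : ∀ i ∈ F, v i ≤ 1) :
    (1 - ∑ i ∈ F, v i ≤ ∏ i ∈ F, (1 - v i)) ∧
      (∏ i ∈ F, (1 - v i) ≤ 1 - ∑ i ∈ F, v i + (∑ i ∈ F, v i) ^ 2) ∧
      0 ≤ ∏ i ∈ F, (1 - v i) := by
  classical
  induction F using Finset.induction with
  | empty => norm_num
  | @insert a F' ha ih =>
      have h0' : ∀ i ∈ F', 0 ≤ v i := fun i hi => h0 i (Finset.mem_insert_of_mem hi)
      have h1' : ∀ i ∈ F', v i ≤ 1 := fun i hi => h1 i (Finset.mem_insert_of_mem hi)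
      obtain ⟨ilow, iup, ipos⟩ := ih h0' h1'
      have hva0 : 0 ≤ v a := h0 a (Finset.mem_insert_self a F')
      have hva1 : v a ≤ 1 := h1 a (Finset.mem_insert_self a F')
      have hS0 : 0 ≤ ∑ i ∈ F', v i := Finset.sum_nonneg h0'
      rw [Finset.prod_insert ha, Finset.sum_insert ha]
      set S := ∑ i ∈ F', v i
      set Pi := ∏ i ∈ F', (1 - v i)
      refine ⟨?_, ?_, ?_⟩
      · have e1 : (1 - v a) * (1 - S) ≤ (1 - v a) * Pi :=
          mul_le_mul_of_nonneg_left ilow (by linarith)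
        nlinarith [mul_nonneg hva0 hS0]
      · have e2 : (1 - v a) * Pi ≤ (1 - v a) * (1 - S + S ^ 2) :=
          mul_le_mul_of_nonneg_left iup (by linarith)
        nlinarith [mul_nonneg hva0 hS0, sq_nonneg S, sq_nonneg (v a),
          mul_nonneg (mul_nonneg hva0 hS0) hS0]
      · exact mul_nonneg (by linarith) ipos

lemma abs_log_le {m x : ℝ} (hm : 0 < m) (hm1 : m ≤ 1) (hx : m ≤ x) :
    |Real.log x| ≤ |x - 1| / m := by
  have hx0 : 0 < x := lt_of_lt_of_le hm hx
  rcases le_or_gt 1 x with h | h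
  · rw [abs_of_nonneg (Real.log_nonneg h), abs_of_nonneg (by linarith)]
    have h2 : Real.log x ≤ x - 1 := Real.log_le_sub_one_of_pos hx0 |>.trans (le_refl _)
    calc Real.log x ≤ x - 1 := h2
      _ = (x - 1) / 1 := (div_one _).symm
      _ ≤ (x - 1) / m := by gcongr <;> linarith
  · have hlog : Real.log x < 0 := Real.log_neg hx0 h
    rw [abs_of_neg hlog, abs_of_neg (by linarith : x - 1 < 0)]
    have h2 : Real.log x⁻¹ ≤ x⁻¹ - 1 :=
      Real.log_le_sub_one_of_pos (inv_pos.mpr hx0)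
    rw [Real.log_inv] at h2
    have h3 : x⁻¹ - 1 = (1 - x) / x := by field_simp
    rw [h3] at h2
    calc -Real.log x ≤ (1 - x) / x := h2
      _ ≤ (1 - x) / m := by gcongr
      _ = -(x - 1) / m := by ring

variable (Fq) in
/-- the basic local variable: `v Q i s = |Q|^{i - (i+1)s}` -/
noncomputable def v (Q : PP Fq) (i : ℕ) (s : ℝ) : ℝ :=
  ((Fintype.card Fq : ℝ) ^ ((i : ℝ) - ((i : ℝ) + 1) * s)) ^ Q.1.natDegree

variable (Fq) in
/-- the regularized local Euler factor -/
noncomputable def E (p : ℕ) (Q : PP Fq) (s : ℝ) : ℝ :=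
  (1 + ∑ i ∈ Finset.range (p - 1), v Fq Q i s) *
    ∏ i ∈ Finset.range (p - 1), (1 - v Fq Q i s)

lemma qR_pos : (0 : ℝ) < (Fintype.card Fq : ℝ) := by
  have := two_le_q (Fq := Fq); linarith

lemma one_lt_qR : (1 : ℝ) < (Fintype.card Fq : ℝ) := by
  have := two_le_q (Fq := Fq); linarith

lemma v_pos (Q : PP Fq) (i : ℕ) (s : ℝ) : 0 < v Fq Q i s :=
  pow_pos (Real.rpow_pos_of_pos qR_pos _) _

lemma v_le_r {s : ℝ} (hs : 1 ≤ s) (Q : PP Fq) (i : ℕ) :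
    v Fq Q i s ≤ ((Fintype.card Fq : ℝ)⁻¹) ^ Q.1.natDegree := by
  refine pow_le_pow_left₀ (Real.rpow_pos_of_pos qR_pos _).le ?_ _
  have h1 : (i : ℝ) - ((i : ℝ) + 1) * s ≤ -1 := by nlinarith [Nat.cast_nonneg (α := ℝ) i]
  calc (Fintype.card Fq : ℝ) ^ ((i : ℝ) - ((i : ℝ) + 1) * s)
      ≤ (Fintype.card Fq : ℝ) ^ (-1 : ℝ) :=
        Real.rpow_le_rpow_of_exponent_le (one_lt_qR).le h1
    _ = (Fintype.card Fq : ℝ)⁻¹ := Real.rpow_neg_one _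

lemma r_le_half (Q : PP Fq) :
    ((Fintype.card Fq : ℝ)⁻¹) ^ Q.1.natDegree ≤ 1 / 2 := by
  have h2 := two_le_q (Fq := Fq)
  calc ((Fintype.card Fq : ℝ)⁻¹) ^ Q.1.natDegree
      ≤ ((Fintype.card Fq : ℝ)⁻¹) ^ 1 :=
        pow_le_pow_of_le_one (by positivity)
          (by rw [inv_le_one_iff₀]; right; linarith) (PP.natDegree_pos Q)
    _ = (Fintype.card Fq : ℝ)⁻¹ := pow_one _
    _ ≤ 1 / 2 := by
        rw [inv_le_comm₀ (by linarith) (by norm_num)]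
        linarith

lemma v_le_half {s : ℝ} (hs : 1 ≤ s) (Q : PP Fq) (i : ℕ) : v Fq Q i s ≤ 1 / 2 :=
  (v_le_r hs Q i).trans (r_le_half Q)

lemma one_sub_v_pos {s : ℝ} (hs : 1 ≤ s) (Q : PP Fq) (i : ℕ) : 0 < 1 - v Fq Q i s := by
  have := v_le_half hs Q i; linarith

/-- lower bound for the regularized factor -/
lemma E_ge {p : ℕ} {s : ℝ} (hs : 1 ≤ s) (Q : PP Fq) :
    (2 : ℝ)⁻¹ ^ (p - 1) ≤ E Fq p Q s := by
  have hT : 0 ≤ ∑ i ∈ Finset.range (p - 1), v Fq Q i s :=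
    Finset.sum_nonneg fun i _ => (v_pos Q i s).le
  have h1 : ((2 : ℝ)⁻¹) ^ (p - 1) ≤ ∏ i ∈ Finset.range (p - 1), (1 - v Fq Q i s) := by
    have h2 : ∏ _i ∈ Finset.range (p - 1), (2 : ℝ)⁻¹
        ≤ ∏ i ∈ Finset.range (p - 1), (1 - v Fq Q i s) := by
      refine Finset.prod_le_prod (fun i _ => by norm_num) (fun i _ => ?_)
      have := v_le_half hs Q i; linarith
    rwa [Finset.prod_const, Finset.card_range] at h2
  calc ((2 : ℝ)⁻¹) ^ (p - 1) ≤ ∏ i ∈ Finset.range (p - 1), (1 - v Fq Q i s) := h1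
    _ ≤ E Fq p Q s := by
        rw [E]
        exact le_mul_of_one_le_left
          (Finset.prod_nonneg fun i _ => (one_sub_v_pos hs Q i).le) (by linarith)

lemma E_pos {p : ℕ} {s : ℝ} (hs : 1 ≤ s) (Q : PP Fq) : 0 < E Fq p Q s :=
  lt_of_lt_of_le (by positivity) (E_ge hs Q)

/-- main estimate: `|E - 1| ≤ p^3 r^2` where `r = |Q|⁻¹`. -/
lemma E_sub_one_abs_le {p : ℕ} {s : ℝ} (hs : 1 ≤ s) (Q : PP Fq) :
    |E Fq p Q s - 1| ≤ (p : ℝ) ^ 3 * (((Fintype.card Fq : ℝ)⁻¹) ^ Q.1.natDegree) ^ 2 := by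
  set r : ℝ := ((Fintype.card Fq : ℝ)⁻¹) ^ Q.1.natDegree with hr
  have hr0 : 0 < r := by positivity
  have hr2 : r ≤ 1 / 2 := r_le_half Q
  set T : ℝ := ∑ i ∈ Finset.range (p - 1), v Fq Q i s with hT
  have hT0 : 0 ≤ T := Finset.sum_nonneg fun i _ => (v_pos Q i s).le
  have hTle : T ≤ (p - 1 : ℕ) * r := by
    rw [hT]
    calc ∑ i ∈ Finset.range (p - 1), v Fq Q i s
        ≤ ∑ _i ∈ Finset.range (p - 1), r :=
          Finset.sum_le_sum fun i _ => v_le_r hs Q i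
      _ = (p - 1 : ℕ) * r := by rw [Finset.sum_const, Finset.card_range, nsmul_eq_mul]
  obtain ⟨hlow, hup, hpos⟩ := prod_one_sub_bounds (Finset.range (p - 1)) (fun i => v Fq Q i s)
    (fun i _ => (v_pos Q i s).le) (fun i _ => by have := v_le_half hs Q i; linarith)
  have hE1 : 1 - T ^ 2 ≤ E Fq p Q s := by
    have := mul_le_mul_of_nonneg_left hlow (by linarith : (0:ℝ) ≤ 1 + T)
    rw [E]; nlinarith
  have hE2 : E Fq p Q s ≤ 1 + T ^ 3 := by
    have := mul_le_mul_of_nonneg_left hup (by linarith : (0:ℝ) ≤ 1 + T)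
    rw [E]; nlinarith
  rcases Nat.eq_zero_or_pos (p - 1) with h0 | h0
  · have hT' : T = 0 := by simp [hT, h0]
    have hnn : (0:ℝ) ≤ (p : ℝ) ^ 3 * r ^ 2 :=
      mul_nonneg (pow_nonneg (Nat.cast_nonneg _) 3) (pow_nonneg hr0.le 2)
    rw [abs_le]
    constructor <;> nlinarith [hT', hnn]
  · set A : ℝ := ((p - 1 : ℕ) : ℝ) with hA
    have hA0 : (0 : ℝ) ≤ A := Nat.cast_nonneg _
    have hA1 : (1 : ℝ) ≤ A := by
      rw [hA]; exact_mod_cast Nat.one_le_iff_ne_zero.mpr (Nat.pos_iff_ne_zero.mp h0)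
    have hAp : A ≤ (p : ℝ) := by
      rw [hA]; exact_mod_cast Nat.sub_le p 1
    have hp1 : (1 : ℝ) ≤ (p : ℝ) := le_trans hA1 hAp
    have hr1 : r ≤ 1 := by linarith
    have c2 : A ^ 2 ≤ (p : ℝ) ^ 2 := pow_le_pow_left₀ hA0 hAp 2
    have c3 : A ^ 3 ≤ (p : ℝ) ^ 3 := pow_le_pow_left₀ hA0 hAp 3
    have cp : (p : ℝ) ^ 2 ≤ (p : ℝ) ^ 3 := pow_le_pow_right₀ hp1 (by norm_num)
    have cr : r ^ 3 ≤ r ^ 2 := pow_le_pow_of_le_one hr0.le hr1 (by norm_num)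
    have key2 : T ^ 2 ≤ (p : ℝ) ^ 3 * r ^ 2 := by
      calc T ^ 2 ≤ (A * r) ^ 2 := pow_le_pow_left₀ hT0 hTle 2
        _ = A ^ 2 * r ^ 2 := by ring
        _ ≤ (p : ℝ) ^ 2 * r ^ 2 :=
            mul_le_mul_of_nonneg_right c2 (pow_nonneg hr0.le 2)
        _ ≤ (p : ℝ) ^ 3 * r ^ 2 :=
            mul_le_mul_of_nonneg_right cp (pow_nonneg hr0.le 2)
    have key3 : T ^ 3 ≤ (p : ℝ) ^ 3 * r ^ 2 := by
      calc T ^ 3 ≤ (A * r) ^ 3 := pow_le_pow_left₀ hT0 hTle 3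
        _ = A ^ 3 * r ^ 3 := by ring
        _ ≤ (p : ℝ) ^ 3 * r ^ 3 :=
            mul_le_mul_of_nonneg_right c3 (pow_nonneg hr0.le 3)
        _ ≤ (p : ℝ) ^ 3 * r ^ 2 :=
            mul_le_mul_of_nonneg_left cr (pow_nonneg (by positivity) 3)
    rw [abs_le]
    constructor <;> linarith

end Analysis

section Analysis2

lemma summable_r2 :
    Summable (fun Q : PP Fq => (((Fintype.card Fq : ℝ)⁻¹) ^ Q.1.natDegree) ^ 2) := by
  have hq0 : (0:ℝ) < (Fintype.card Fq : ℝ) := qR_pos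
  have hkey : (Fintype.card Fq : ℝ) * ((Fintype.card Fq : ℝ)⁻¹) ^ 2
      = (Fintype.card Fq : ℝ)⁻¹ := by
    field_simp
  have h1 : Summable (fun Q : PP Fq => (((Fintype.card Fq : ℝ)⁻¹) ^ 2) ^ Q.1.natDegree) := by
    refine summable_pow_deg (by positivity) ?_
    rw [hkey]
    exact inv_lt_one_of_one_lt₀ (one_lt_qR)
  refine h1.congr fun Q => ?_
  rw [← pow_mul, ← pow_mul, mul_comm]

lemma abs_log_E_le {p : ℕ} {s : ℝ} (hs : 1 ≤ s) (Q : PP Fq) :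
    |Real.log (E Fq p Q s)|
      ≤ (2:ℝ) ^ (p - 1) * ((p : ℝ) ^ 3 * (((Fintype.card Fq : ℝ)⁻¹) ^ Q.1.natDegree) ^ 2) := by
  have hm : (0:ℝ) < (2:ℝ)⁻¹ ^ (p - 1) := by positivity
  have hm1 : (2:ℝ)⁻¹ ^ (p - 1) ≤ 1 :=
    pow_le_one₀ (by norm_num) (by norm_num)
  have h := abs_log_le hm hm1 (E_ge hs Q)
  refine h.trans ?_
  rw [div_le_iff₀ hm]
  calc |E Fq p Q s - 1|
      ≤ (p : ℝ) ^ 3 * (((Fintype.card Fq : ℝ)⁻¹) ^ Q.1.natDegree) ^ 2 :=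
        E_sub_one_abs_le hs Q
    _ = (2:ℝ) ^ (p - 1) * ((p : ℝ) ^ 3 * (((Fintype.card Fq : ℝ)⁻¹) ^ Q.1.natDegree) ^ 2) *
          (2:ℝ)⁻¹ ^ (p - 1) := by
        rw [mul_comm ((2:ℝ) ^ (p - 1)) _, mul_assoc, ← mul_pow]
        norm_num

lemma summable_log_E {p : ℕ} {s : ℝ} (hs : 1 ≤ s) :
    Summable (fun Q : PP Fq => Real.log (E Fq p Q s)) := by
  refine Summable.of_abs ?_
  refine Summable.of_nonneg_of_le (fun Q => abs_nonneg _) (fun Q => abs_log_E_le hs Q) ?_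
  exact (summable_r2.mul_left ((p : ℝ) ^ 3)).mul_left ((2:ℝ) ^ (p - 1))

lemma hasProd_E {p : ℕ} {s : ℝ} (hs : 1 ≤ s) :
    HasProd (fun Q : PP Fq => E Fq p Q s)
      (Real.exp (∑' Q : PP Fq, Real.log (E Fq p Q s))) := by
  have h := ((summable_log_E (Fq := Fq) (p := p) hs).hasSum).rexp
  have hfun : (Real.exp ∘ fun Q : PP Fq => Real.log (E Fq p Q s))
      = fun Q : PP Fq => E Fq p Q s :=
    funext fun Q => Real.exp_log (E_pos hs Q)
  rwa [hfun] at h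

lemma continuous_v (Q : PP Fq) (i : ℕ) : Continuous (fun s => v Fq Q i s) := by
  have h : (fun s => v Fq Q i s) = fun s =>
      (Real.exp (Real.log (Fintype.card Fq : ℝ) * ((i : ℝ) - ((i : ℝ) + 1) * s)))
        ^ Q.1.natDegree := by
    funext s
    rw [v, Real.rpow_def_of_pos qR_pos]
  rw [h]
  exact (Real.continuous_exp.comp (by fun_prop)).pow _

lemma continuous_E (p : ℕ) (Q : PP Fq) : Continuous (fun s => E Fq p Q s) := by
  apply Continuous.mul
  · exact continuous_const.add
      (continuous_finset_sum _ fun i _ => continuous_v Q i)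
  · exact continuous_finset_prod _ fun i _ =>
      continuous_const.sub (continuous_v Q i)

lemma tendsto_tsum_log_E (p : ℕ) :
    Tendsto (fun s => ∑' Q : PP Fq, Real.log (E Fq p Q s)) (𝓝[>] (1:ℝ))
      (𝓝 (∑' Q : PP Fq, Real.log (E Fq p Q 1))) := by
  refine tendsto_tsum_of_dominated_convergence
    (bound := fun Q : PP Fq =>
      (2:ℝ) ^ (p - 1) * ((p : ℝ) ^ 3 * (((Fintype.card Fq : ℝ)⁻¹) ^ Q.1.natDegree) ^ 2))
    ((summable_r2.mul_left ((p : ℝ) ^ 3)).mul_left ((2:ℝ) ^ (p - 1))) (fun Q => ?_) ?_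
  · have h1 : Tendsto (fun s => E Fq p Q s) (𝓝[>] (1:ℝ)) (𝓝 (E Fq p Q 1)) :=
      ((continuous_E p Q).continuousAt).tendsto.mono_left nhdsWithin_le_nhds
    exact ((Real.continuousAt_log (E_pos le_rfl Q).ne').tendsto).comp h1
  · filter_upwards [self_mem_nhdsWithin] with s hs Q
    rw [Real.norm_eq_abs]
    exact abs_log_E_le (le_of_lt hs) Q

lemma tendsto_factor {a : ℝ} (ha : 0 < a) :
    Tendsto (fun s : ℝ => (s - 1) * (1 - Real.exp (-(a * (s - 1))))⁻¹)
      (𝓝[>] (1:ℝ)) (𝓝 a⁻¹) := by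
  have hf : HasDerivAt (fun h : ℝ => 1 - Real.exp (-(a * h))) a 0 := by
    have h1 : HasDerivAt (fun h : ℝ => -(a * h)) (-a) 0 := by
      simpa using ((hasDerivAt_id (0:ℝ)).const_mul (-a))
    have h2 := h1.exp
    have h3 := (hasDerivAt_const (0:ℝ) (1:ℝ)).sub h2
    simpa using h2.const_sub (1:ℝ)
  rw [hasDerivAt_iff_tendsto_slope] at hf
  have hslope : Tendsto (slope (fun h : ℝ => 1 - Real.exp (-(a * h))) 0)
      (𝓝[>] (0:ℝ)) (𝓝 a) :=
    hf.mono_left (nhdsWithin_mono 0 (fun x hx => ne_of_gt hx))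
  have hinv := hslope.inv₀ (ne_of_gt ha)
  have hsub : Tendsto (fun s : ℝ => s - 1) (𝓝[>] (1:ℝ)) (𝓝[>] (0:ℝ)) := by
    apply tendsto_nhdsWithin_of_tendsto_nhds_of_eventually_within
    · have h4 : Tendsto (fun s : ℝ => s - 1) (𝓝 (1:ℝ)) (𝓝 (0:ℝ)) := by
        have h5 := (continuous_sub_right (1:ℝ)).tendsto 1
        simpa using h5
      exact h4.mono_left nhdsWithin_le_nhds
    · filter_upwards [self_mem_nhdsWithin] with s hs
      simp only [Set.mem_Ioi] at hs ⊢
      linarith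
  have hcomp := hinv.comp hsub
  refine Tendsto.congr ?_ hcomp
  intro s
  show (slope (fun h : ℝ => 1 - Real.exp (-(a * h))) 0 (s - 1))⁻¹
      = (s - 1) * (1 - Real.exp (-(a * (s - 1))))⁻¹
  rw [slope_def_field]
  have h0 : (1:ℝ) - Real.exp (-(a * 0)) = 0 := by norm_num
  rw [h0]
  rw [sub_zero, sub_zero, inv_div, div_eq_mul_inv]

end Analysis2

section Main

lemma npow_rpow (n : ℕ) (a : ℝ) :
    (((Fintype.card Fq : ℝ)) ^ n) ^ a = ((Fintype.card Fq : ℝ) ^ a) ^ n := by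
  rw [← Real.rpow_natCast ((Fintype.card Fq : ℝ)) n, ← Real.rpow_mul qR_pos.le,
    mul_comm, Real.rpow_mul qR_pos.le, Real.rpow_natCast]

lemma Z_eq (p : ℕ) (hp3 : 3 ≤ p) (Q : PP Fq) {s : ℝ} (hs : 1 < s) :
    (1 + (∑ i ∈ Finset.range (p - 2),
          ((Fintype.card Fq : ℝ) ^ Q.1.natDegree) ^ (((i : ℝ) + 1) - ((i : ℝ) + 2) * s))
      - ∑ i ∈ Finset.range (p - 1),
          ((Fintype.card Fq : ℝ) ^ Q.1.natDegree) ^ ((i : ℝ) - ((i : ℝ) + 2) * s)) /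
      (1 - ((Fintype.card Fq : ℝ) ^ Q.1.natDegree) ^ (((p : ℝ) - 1) - (p : ℝ) * s))
    = (∏ i ∈ Finset.range (p - 1), (1 - v Fq Q (i + 1) s)⁻¹) * E Fq p Q s := by
  have hs1 : (1:ℝ) ≤ s := hs.le
  have hterm1 : ∀ i : ℕ,
      ((Fintype.card Fq : ℝ) ^ Q.1.natDegree) ^ (((i : ℝ) + 1) - ((i : ℝ) + 2) * s)
        = v Fq Q (i + 1) s := by
    intro i
    rw [npow_rpow, v]
    congr 2
    push_cast; ring
  have hterm2 : ∀ i : ℕ,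
      ((Fintype.card Fq : ℝ) ^ Q.1.natDegree) ^ ((i : ℝ) - ((i : ℝ) + 2) * s)
        = v Fq Q 0 s * v Fq Q i s := by
    intro i
    rw [npow_rpow, v, v, ← mul_pow, ← Real.rpow_add qR_pos]
    congr 2
    push_cast; ring
  have hterm3 : ((Fintype.card Fq : ℝ) ^ Q.1.natDegree) ^ (((p : ℝ) - 1) - (p : ℝ) * s)
      = v Fq Q (p - 1) s := by
    rw [npow_rpow, v]
    congr 2
    rw [Nat.cast_sub (by omega : 1 ≤ p)]
    push_cast; ring
  have hsum1 : ∑ i ∈ Finset.range (p - 2),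
      ((Fintype.card Fq : ℝ) ^ Q.1.natDegree) ^ (((i : ℝ) + 1) - ((i : ℝ) + 2) * s)
        = ∑ i ∈ Finset.range (p - 2), v Fq Q (i + 1) s :=
    Finset.sum_congr rfl fun i _ => hterm1 i
  have hsum2 : ∑ i ∈ Finset.range (p - 1),
      ((Fintype.card Fq : ℝ) ^ Q.1.natDegree) ^ ((i : ℝ) - ((i : ℝ) + 2) * s)
        = ∑ i ∈ Finset.range (p - 1), v Fq Q 0 s * v Fq Q i s :=
    Finset.sum_congr rfl fun i _ => hterm2 i
  rw [hsum1, hsum2, hterm3]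
  have e1 : ∑ i ∈ Finset.range (p - 1), v Fq Q i s
      = v Fq Q 0 s + ∑ i ∈ Finset.range (p - 2), v Fq Q (i + 1) s := by
    have hp : p - 1 = (p - 2) + 1 := by omega
    rw [hp, Finset.sum_range_succ', add_comm]
  have hnum : 1 + (∑ i ∈ Finset.range (p - 2), v Fq Q (i + 1) s)
      - ∑ i ∈ Finset.range (p - 1), v Fq Q 0 s * v Fq Q i s
      = (1 - v Fq Q 0 s) * (1 + ∑ i ∈ Finset.range (p - 1), v Fq Q i s) := by
    rw [← Finset.mul_sum, e1]
    ring
  rw [hnum]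
  have hne : ∀ j, 1 - v Fq Q j s ≠ 0 := fun j => (one_sub_v_pos hs1 Q j).ne'
  have hprod : (∏ i ∈ Finset.range (p - 1), (1 - v Fq Q i s)) * (1 - v Fq Q (p - 1) s)
      = (1 - v Fq Q 0 s) * ∏ i ∈ Finset.range (p - 1), (1 - v Fq Q (i + 1) s) := by
    rw [← Finset.prod_range_succ (fun i => 1 - v Fq Q i s) (p - 1),
      Finset.prod_range_succ']
    rw [mul_comm]
  have hPne : (∏ i ∈ Finset.range (p - 1), (1 - v Fq Q (i + 1) s)) ≠ 0 :=
    Finset.prod_ne_zero_iff.mpr fun i _ => hne (i + 1)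
  rw [E, div_eq_iff (hne (p - 1)), Finset.prod_inv_distrib]
  field_simp
  linear_combination (-1 : ℝ) * (1 + ∑ i ∈ Finset.range (p - 1), v Fq Q i s) * hprod

lemma hasProd_finsetProd {ι κ : Type*} (T : Finset κ) (f : κ → ι → ℝ) (a : κ → ℝ)
    (h : ∀ i ∈ T, HasProd (f i) (a i)) :
    HasProd (fun x => ∏ i ∈ T, f i x) (∏ i ∈ T, a i) := by
  classical
  induction T using Finset.induction with
  | empty => simpa using hasProd_one
  | @insert b T' hb ih =>
      have h1 := h b (Finset.mem_insert_self b T')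
      have h2 := ih fun i hi => h i (Finset.mem_insert_of_mem hi)
      have h3 := h1.mul h2
      have h4 : (fun x => ∏ i ∈ insert b T', f i x)
          = fun x => f b x * ∏ i ∈ T', f i x :=
        funext fun x => Finset.prod_insert hb
      rw [Finset.prod_insert hb, h4]
      exact h3

lemma hasProd_M (p : ℕ) {s : ℝ} (hs : 1 < s) :
    HasProd (fun Q : PP Fq => ∏ i ∈ Finset.range (p - 1), (1 - v Fq Q (i + 1) s)⁻¹)
      (∏ i ∈ Finset.range (p - 1),
        (1 - (Fintype.card Fq : ℝ) *
          (Fintype.card Fq : ℝ) ^ (((i + 1 : ℕ) : ℝ) - (((i + 1 : ℕ) : ℝ) + 1) * s))⁻¹) := by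
  refine hasProd_finsetProd _ _ _ fun i _ => ?_
  have hc : (0:ℝ) < (Fintype.card Fq : ℝ) ^ (((i + 1 : ℕ) : ℝ) - (((i + 1 : ℕ) : ℝ) + 1) * s) :=
    Real.rpow_pos_of_pos qR_pos _
  have hqc : (Fintype.card Fq : ℝ) *
      (Fintype.card Fq : ℝ) ^ (((i + 1 : ℕ) : ℝ) - (((i + 1 : ℕ) : ℝ) + 1) * s) < 1 := by
    have h1 : (Fintype.card Fq : ℝ) *
        (Fintype.card Fq : ℝ) ^ (((i + 1 : ℕ) : ℝ) - (((i + 1 : ℕ) : ℝ) + 1) * s)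
        = (Fintype.card Fq : ℝ) ^ ((1:ℝ) + ((((i + 1 : ℕ) : ℝ)) - (((i + 1 : ℕ) : ℝ) + 1) * s)) := by
      rw [Real.rpow_add qR_pos, Real.rpow_one]
    rw [h1]
    refine Real.rpow_lt_one_of_one_lt_of_neg one_lt_qR ?_
    have hi : (0:ℝ) ≤ ((i + 1 : ℕ) : ℝ) := Nat.cast_nonneg _
    nlinarith
  exact hasProd_euler hc hqc

end Main

theorem main (p : ℕ) (hp3 : 3 ≤ p) (Z : PP Fq → ℝ → ℝ)
    (hZ : ∀ Q s, Z Q s =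
      (1 + (∑ i ∈ Finset.range (p - 2),
            ((Fintype.card Fq : ℝ) ^ Q.1.natDegree) ^ (((i : ℝ) + 1) - ((i : ℝ) + 2) * s))
        - ∑ i ∈ Finset.range (p - 1),
            ((Fintype.card Fq : ℝ) ^ Q.1.natDegree) ^ ((i : ℝ) - ((i : ℝ) + 2) * s)) /
        (1 - ((Fintype.card Fq : ℝ) ^ Q.1.natDegree) ^ (((p : ℝ) - 1) - (p : ℝ) * s))) :
    ∃ L : ℝ, 0 < L ∧
      (∀ s : ℝ, 1 < s → Multipliable (fun Q => Z Q s)) ∧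
      Tendsto (fun s : ℝ => (s - 1) ^ (p - 1) * ∏' Q : PP Fq, Z Q s)
        (𝓝[>] (1 : ℝ)) (𝓝 L) := by
  have hq1 : (1:ℝ) < (Fintype.card Fq : ℝ) := one_lt_qR
  have hlogq : 0 < Real.log (Fintype.card Fq : ℝ) := Real.log_pos hq1
  have hZfun : ∀ {s : ℝ}, 1 < s → (fun Q : PP Fq => Z Q s)
      = fun Q : PP Fq =>
        (∏ i ∈ Finset.range (p - 1), (1 - v Fq Q (i + 1) s)⁻¹) * E Fq p Q s :=
    fun {s} hs => funext fun Q => (hZ Q s).trans (Z_eq p hp3 Q hs)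
  refine ⟨(∏ i ∈ Finset.range (p - 1),
      (((i : ℝ) + 2) * Real.log (Fintype.card Fq : ℝ))⁻¹) *
      Real.exp (∑' Q : PP Fq, Real.log (E Fq p Q 1)), ?_, ?_, ?_⟩
  · refine mul_pos (Finset.prod_pos fun i _ => ?_) (Real.exp_pos _)
    have : (0:ℝ) < ((i : ℝ) + 2) * Real.log (Fintype.card Fq : ℝ) := by positivity
    exact inv_pos.mpr this
  · intro s hs
    rw [hZfun hs]
    exact ((hasProd_M p hs).mul (hasProd_E (p := p) hs.le)).multipliable
  · have heq : ∀ᶠ s in 𝓝[>] (1:ℝ),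
        (∏ i ∈ Finset.range (p - 1), ((s - 1) *
          (1 - (Fintype.card Fq : ℝ) *
            (Fintype.card Fq : ℝ) ^ (((i + 1 : ℕ) : ℝ) - (((i + 1 : ℕ) : ℝ) + 1) * s))⁻¹)) *
          Real.exp (∑' Q : PP Fq, Real.log (E Fq p Q s))
        = (s - 1) ^ (p - 1) * ∏' Q : PP Fq, Z Q s := by
      filter_upwards [self_mem_nhdsWithin] with s hs
      have hs' : (1:ℝ) < s := hs
      have h2 := (hasProd_M p hs').mul (hasProd_E (Fq := Fq) (p := p) hs'.le)
      have h3 : ∏' Q : PP Fq, Z Q s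
          = (∏ i ∈ Finset.range (p - 1),
              (1 - (Fintype.card Fq : ℝ) *
                (Fintype.card Fq : ℝ) ^ (((i + 1 : ℕ) : ℝ) - (((i + 1 : ℕ) : ℝ) + 1) * s))⁻¹) *
            Real.exp (∑' Q : PP Fq, Real.log (E Fq p Q s)) := by
        rw [hZfun hs']
        exact h2.tprod_eq
      rw [h3, Finset.prod_mul_distrib, Finset.prod_const, Finset.card_range]
      ring
    have hfac : ∀ i ∈ Finset.range (p - 1),
        Tendsto (fun s : ℝ => (s - 1) *
          (1 - (Fintype.card Fq : ℝ) *
            (Fintype.card Fq : ℝ) ^ (((i + 1 : ℕ) : ℝ) - (((i + 1 : ℕ) : ℝ) + 1) * s))⁻¹)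
          (𝓝[>] (1:ℝ)) (𝓝 ((((i : ℝ) + 2) * Real.log (Fintype.card Fq : ℝ))⁻¹)) := by
      intro i _
      have ha : (0:ℝ) < ((i : ℝ) + 2) * Real.log (Fintype.card Fq : ℝ) := by positivity
      have hrw : ∀ s : ℝ, (Fintype.card Fq : ℝ) *
          (Fintype.card Fq : ℝ) ^ (((i + 1 : ℕ) : ℝ) - (((i + 1 : ℕ) : ℝ) + 1) * s)
          = Real.exp (-((((i : ℝ) + 2) * Real.log (Fintype.card Fq : ℝ)) * (s - 1))) := by
        intro s
        have h1 : (Fintype.card Fq : ℝ) *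
            (Fintype.card Fq : ℝ) ^ (((i + 1 : ℕ) : ℝ) - (((i + 1 : ℕ) : ℝ) + 1) * s)
            = (Fintype.card Fq : ℝ) ^
                ((1:ℝ) + ((((i + 1 : ℕ) : ℝ)) - (((i + 1 : ℕ) : ℝ) + 1) * s)) := by
          rw [Real.rpow_add qR_pos, Real.rpow_one]
        rw [h1, Real.rpow_def_of_pos qR_pos]
        congr 1
        push_cast; ring
      refine Tendsto.congr (fun s => ?_) (tendsto_factor ha)
      rw [hrw s]
    have hprod_t := tendsto_finset_prod (Finset.range (p - 1)) hfac
    have hexp_t : Tendsto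
        (fun s => Real.exp (∑' Q : PP Fq, Real.log (E Fq p Q s))) (𝓝[>] (1:ℝ))
        (𝓝 (Real.exp (∑' Q : PP Fq, Real.log (E Fq p Q 1)))) :=
      (Real.continuous_exp.continuousAt.tendsto).comp (tendsto_tsum_log_E p)
    exact Tendsto.congr' heq (hprod_t.mul hexp_t)

end AS13

/-- Over a finite field `𝔽_q` with `p ≥ 3` a prime, the Euler product
`∏_Q Z_Q(s)` (over monic irreducible `Q`, convergent for each `s > 1`) satisfies:
there is a positive real `L` with `(s-1)^{p-1} · ∏_Q Z_Q(s) → L` as `s → 1⁺`,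
i.e. the Dirichlet series counting Artin–Schreier covers has a pole of order exactly
`p-1` at `s = 1`. -/
theorem stmt_13 (Fq : Type*) [Field Fq] [Fintype Fq] (p : ℕ) (hp : p.Prime) (hp3 : 3 ≤ p)
    (Z : {Q : Fq[X] // Q.Monic ∧ Irreducible Q} → ℝ → ℝ)
    (hZ : ∀ Q s, Z Q s =
      (1 + (∑ i ∈ Finset.range (p - 2),
            ((Fintype.card Fq : ℝ) ^ Q.1.natDegree) ^ (((i : ℝ) + 1) - ((i : ℝ) + 2) * s))
        - ∑ i ∈ Finset.range (p - 1),
            ((Fintype.card Fq : ℝ) ^ Q.1.natDegree) ^ ((i : ℝ) - ((i : ℝ) + 2) * s)) /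
        (1 - ((Fintype.card Fq : ℝ) ^ Q.1.natDegree) ^ (((p : ℝ) - 1) - (p : ℝ) * s))) :
    ∃ L : ℝ, 0 < L ∧
      (∀ s : ℝ, 1 < s → Multipliable (fun Q => Z Q s)) ∧
      Tendsto (fun s : ℝ => (s - 1) ^ (p - 1) *
          ∏' Q : {Q : Fq[X] // Q.Monic ∧ Irreducible Q}, Z Q s)
        (𝓝[>] (1 : ℝ)) (𝓝 L) :=
  AS13.main p hp3 Z hZ
end

section
/- Fix a finite field 𝔽_q. For each integer d ≥ 0, let B(d) = ∑_D ∏_{Q ∣ D} (|Q| - 1), the sum over all monic squarefree polynomials D ∈ 𝔽_q[x] of degree d, where the inner product is over the distinct monic irreducible polynomials Q dividing D. Then, as d → ∞, the ratio B(d)/q^{2d} tends to ∏_Q (1 - 2·|Q|^{-2} + |Q|^{-3}), the product over all monic irreducible polynomials Q ∈ 𝔽_q[x] (which converges to a positive real number). -/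
open Polynomial Filter Topology Finset UniqueFactorizationMonoid

set_option linter.unusedSectionVars false
set_option linter.unnecessarySimpa false

namespace AS17

variable {Fq : Type*} [Field Fq] [Fintype Fq] [DecidableEq Fq]

noncomputable instance (n : ℕ) : Fintype {p : Fq[X] // p.Monic ∧ p.natDegree = n} :=
  Fintype.ofEquiv (Fin n → Fq)
    (((monicEquivDegreeLT n).trans (degreeLTEquiv Fq n).toEquiv)).symm

/-- The finset of monic polynomials of `natDegree` `n`. -/
noncomputable def MX (Fq : Type*) [Field Fq] [Fintype Fq] [DecidableEq Fq] (n : ℕ) :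
    Finset Fq[X] :=
  (Finset.univ : Finset {p : Fq[X] // p.Monic ∧ p.natDegree = n}).image Subtype.val

lemma mem_MX {n : ℕ} {f : Fq[X]} : f ∈ MX Fq n ↔ f.Monic ∧ f.natDegree = n := by
  simp only [MX, Finset.mem_image, Finset.mem_univ, true_and]
  constructor
  · rintro ⟨⟨p, hp⟩, rfl⟩; exact hp
  · intro h; exact ⟨⟨f, h⟩, rfl⟩

lemma card_MX (n : ℕ) : (MX Fq n).card = Fintype.card Fq ^ n := by
  rw [MX, Finset.card_image_of_injective _ Subtype.val_injective, Finset.card_univ,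
    Fintype.card_congr ((monicEquivDegreeLT n).trans (degreeLTEquiv Fq n).toEquiv)]
  simp

/-- The finset of monic irreducible polynomials of `natDegree` `n`. -/
noncomputable def QX (Fq : Type*) [Field Fq] [Fintype Fq] [DecidableEq Fq] (n : ℕ) :
    Finset Fq[X] :=
  @Finset.filter _ (fun f => Irreducible f) (Classical.decPred _) (MX Fq n)

lemma mem_QX {n : ℕ} {f : Fq[X]} : f ∈ QX Fq n ↔ (f.Monic ∧ Irreducible f) ∧ f.natDegree = n := by
  simp only [QX, Finset.mem_filter, mem_MX]; tauto

lemma card_QX_le (n : ℕ) : (QX Fq n).card ≤ Fintype.card Fq ^ n := by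
  calc (QX Fq n).card ≤ (MX Fq n).card := Finset.card_le_card (fun f hf => (mem_QX.mp hf).1.elim (fun h1 h2 => mem_MX.mpr ⟨h1, (mem_QX.mp hf).2⟩))
  _ = Fintype.card Fq ^ n := card_MX n

/-- Monic irreducibles of degree between 1 and `J`. -/
noncomputable def Qle (Fq : Type*) [Field Fq] [Fintype Fq] [DecidableEq Fq] (J : ℕ) :
    Finset Fq[X] :=
  (Finset.Icc 1 J).biUnion (QX Fq)

lemma mem_Qle {J : ℕ} {f : Fq[X]} :
    f ∈ Qle Fq J ↔ (f.Monic ∧ Irreducible f) ∧ f.natDegree ≤ J := by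
  simp only [Qle, Finset.mem_biUnion, Finset.mem_Icc, mem_QX]
  constructor
  · rintro ⟨n, ⟨h1, h2⟩, h3, rfl⟩; exact ⟨h3, h2⟩
  · rintro ⟨h1, h2⟩
    exact ⟨f.natDegree, ⟨h1.2.natDegree_pos, h2⟩, h1, rfl⟩

lemma Qle_mono : Monotone (Qle Fq) := fun a b hab => by
  intro f hf; rw [mem_Qle] at hf ⊢; exact ⟨hf.1, hf.2.trans hab⟩

/-- The finset of monic irreducible factors of a polynomial. -/
noncomputable def sfactors (D : Fq[X]) : Finset Fq[X] :=
  (normalizedFactors D).toFinset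

lemma mem_normalizedFactors_iff_poly {D Q : Fq[X]} (hD : D ≠ 0) :
    Q ∈ normalizedFactors D ↔ (Q.Monic ∧ Irreducible Q) ∧ Q ∣ D := by
  constructor
  · intro h
    have hirr := irreducible_of_normalized_factor Q h
    have hnorm := normalize_normalized_factor Q h
    have hQ0 : Q ≠ 0 := hirr.ne_zero
    refine ⟨⟨?_, hirr⟩, dvd_of_mem_normalizedFactors h⟩
    have := Polynomial.monic_normalize (p := Q) hQ0
    rwa [hnorm] at this
  · rintro ⟨⟨hmon, hirr⟩, hdvd⟩
    obtain ⟨p, hp, hassoc⟩ := exists_mem_normalizedFactors_of_dvd hD hirr hdvd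
    have hp0 : p ≠ 0 := (irreducible_of_normalized_factor p hp).ne_zero
    have hpmon : p.Monic := by
      have := Polynomial.monic_normalize (p := p) hp0
      rwa [normalize_normalized_factor p hp] at this
    rwa [Polynomial.eq_of_monic_of_associated hmon hpmon hassoc]

lemma mem_sfactors {D Q : Fq[X]} (hD : D ≠ 0) :
    Q ∈ sfactors D ↔ (Q.Monic ∧ Irreducible Q) ∧ Q ∣ D := by
  rw [sfactors, Multiset.mem_toFinset, mem_normalizedFactors_iff_poly hD]

lemma sfactors_prod {D : Fq[X]} (hD : D.Monic) (hsf : Squarefree D) :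
    ∏ Q ∈ sfactors D, Q = D := by
  have hD0 : D ≠ 0 := hD.ne_zero
  have hnodup : (normalizedFactors D).Nodup :=
    (squarefree_iff_nodup_normalizedFactors hD0).mp hsf
  have hval : (sfactors D).val = normalizedFactors D := by
    rw [sfactors, Multiset.toFinset_val, Multiset.dedup_eq_self.mpr hnodup]
  have hprod : ∏ Q ∈ sfactors D, Q = (normalizedFactors D).prod := by
    rw [Finset.prod_eq_multiset_prod, hval, Multiset.map_id']
  have hassoc : Associated (normalizedFactors D).prod D := prod_normalizedFactors hD0
  have hmonall : ∀ p ∈ normalizedFactors D, p.Monic := fun p hp =>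
    ((mem_normalizedFactors_iff_poly hD0).mp hp).1.1
  have hmon : (normalizedFactors D).prod.Monic := by
    have := Polynomial.monic_multiset_prod_of_monic (normalizedFactors D) id
      (fun p hp => hmonall p hp)
    simpa using this
  rw [hprod]
  exact Polynomial.eq_of_monic_of_associated hmon hD hassoc

section S
variable {S : Finset Fq[X]} (hS : ∀ Q ∈ S, Q.Monic ∧ Irreducible Q)
include hS

lemma prod_monic : (∏ Q ∈ S, Q).Monic :=
  Polynomial.monic_prod_of_monic _ _ (fun Q hQ => (hS Q hQ).1)

lemma prod_ne_zero : (∏ Q ∈ S, Q) ≠ 0 := (prod_monic hS).ne_zero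

lemma natDegree_prod_S : (∏ Q ∈ S, Q).natDegree = ∑ Q ∈ S, Q.natDegree :=
  Polynomial.natDegree_prod _ _ (fun Q hQ => (hS Q hQ).2.ne_zero)

lemma squarefree_prod : Squarefree (∏ Q ∈ S, Q) := by
  classical
  induction S using Finset.cons_induction with
  | empty => simpa using squarefree_one
  | cons P S hP ih =>
    rw [Finset.prod_cons]
    have hPmem := hS P (Finset.mem_cons_self P S)
    have hSrest : ∀ Q ∈ S, Q.Monic ∧ Irreducible Q :=
      fun Q hQ => hS Q (Finset.mem_cons_of_mem hQ)
    refine squarefree_mul_iff.mpr ⟨?_, hPmem.2.squarefree, ih hSrest⟩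
    refine hPmem.2.isRelPrime_iff_not_dvd.mpr ?_
    intro hdvd
    have hprime : Prime P := hPmem.2.prime
    obtain ⟨Q, hQS, hPQ⟩ := hprime.exists_mem_finset_dvd hdvd
    have hQ := hSrest Q hQS
    have : P = Q :=
      Polynomial.eq_of_monic_of_associated hPmem.1 hQ.1 (hPmem.2.associated_of_dvd hQ.2 hPQ)
    exact hP (this ▸ hQS)

lemma sfactors_of_prod : sfactors (∏ Q ∈ S, Q) = S := by
  ext Q
  rw [mem_sfactors (prod_ne_zero hS)]
  constructor
  · rintro ⟨⟨hmon, hirr⟩, hdvd⟩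
    obtain ⟨P, hPS, hQP⟩ := hirr.prime.exists_mem_finset_dvd hdvd
    have hP := hS P hPS
    have : Q = P :=
      Polynomial.eq_of_monic_of_associated hmon hP.1 (hirr.associated_of_dvd hP.2 hQP)
    exact this ▸ hPS
  · intro hQS
    exact ⟨hS Q hQS, Finset.dvd_prod_of_mem _ hQS⟩

lemma prod_dvd_of_subset_sfactors {f : Fq[X]} (hf : f ≠ 0) (hsub : S ⊆ sfactors f) :
    (∏ Q ∈ S, Q) ∣ f := by
  have hle : S.val ≤ normalizedFactors f := by
    rw [Multiset.le_iff_count]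
    intro a
    by_cases ha : a ∈ S
    · have : a ∈ normalizedFactors f := by
        have := hsub ha
        rwa [sfactors, Multiset.mem_toFinset] at this
      calc S.val.count a = 1 := Multiset.count_eq_one_of_mem S.nodup ha
        _ ≤ _ := Multiset.one_le_count_iff_mem.mpr this
    · simp [Multiset.count_eq_zero_of_notMem, ha]
  calc (∏ Q ∈ S, Q) = S.val.prod := by rw [Finset.prod_eq_multiset_prod, Multiset.map_id']
    _ ∣ (normalizedFactors f).prod := Multiset.prod_dvd_prod_of_le hle
    _ ∣ f := (prod_normalizedFactors hf).dvd

end S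
/-- Monic squarefree polynomials of degree `d`. -/
noncomputable def SF (Fq : Type*) [Field Fq] [Fintype Fq] [DecidableEq Fq] (d : ℕ) :
    Finset Fq[X] :=
  @Finset.filter _ (fun f => Squarefree f) (Classical.decPred _) (MX Fq d)

lemma mem_SF {d : ℕ} {f : Fq[X]} :
    f ∈ SF Fq d ↔ f.Monic ∧ Squarefree f ∧ f.natDegree = d := by
  simp only [SF, Finset.mem_filter, mem_MX]; tauto

/-- Finsets of monic irreducibles with total degree `d`. -/
noncomputable def Sset (Fq : Type*) [Field Fq] [Fintype Fq] [DecidableEq Fq] (d : ℕ) :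
    Finset (Finset Fq[X]) :=
  @Finset.filter _ (fun S => ∑ Q ∈ S, Q.natDegree = d) (Classical.decPred _)
    (Qle Fq d).powerset

lemma mem_Sset {d : ℕ} {S : Finset Fq[X]} :
    S ∈ Sset Fq d ↔ (∀ Q ∈ S, Q.Monic ∧ Irreducible Q) ∧ ∑ Q ∈ S, Q.natDegree = d := by
  simp only [Sset, Finset.mem_filter, Finset.mem_powerset]
  constructor
  · rintro ⟨hsub, hsum⟩
    exact ⟨fun Q hQ => (mem_Qle.mp (hsub hQ)).1, hsum⟩
  · rintro ⟨hall, hsum⟩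
    refine ⟨fun Q hQ => mem_Qle.mpr ⟨hall Q hQ, ?_⟩, hsum⟩
    calc Q.natDegree ≤ ∑ P ∈ S, P.natDegree :=
          Finset.single_le_sum (fun P _ => Nat.zero_le _) hQ
      _ = d := hsum

lemma sum_SF_eq {β : Type*} [AddCommMonoid β] (d : ℕ) (F : Finset Fq[X] → β) :
    ∑ D ∈ SF Fq d, F (sfactors D) = ∑ S ∈ Sset Fq d, F S := by
  refine Finset.sum_nbij' (fun D => sfactors D) (fun S => ∏ Q ∈ S, Q) ?_ ?_ ?_ ?_ ?_
  · intro D hD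
    obtain ⟨hmon, hsf, hdeg⟩ := mem_SF.mp hD
    have h0 : D ≠ 0 := hmon.ne_zero
    have hall : ∀ Q ∈ sfactors D, Q.Monic ∧ Irreducible Q :=
      fun Q hQ => ((mem_sfactors h0).mp hQ).1
    refine mem_Sset.mpr ⟨hall, ?_⟩
    have := natDegree_prod_S hall
    rw [sfactors_prod hmon hsf] at this
    rw [← this, hdeg]
  · intro S hS
    obtain ⟨hall, hsum⟩ := mem_Sset.mp hS
    refine mem_SF.mpr ⟨prod_monic hall, squarefree_prod hall, ?_⟩
    rw [natDegree_prod_S hall, hsum]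
  · intro D hD
    obtain ⟨hmon, hsf, _⟩ := mem_SF.mp hD
    exact sfactors_prod hmon hsf
  · intro S hS
    exact sfactors_of_prod (mem_Sset.mp hS).1
  · intro D hD; rfl

lemma key_B (d : ℕ) :
    ∑ᶠ D ∈ {D : Fq[X] | D.Monic ∧ Squarefree D ∧ D.natDegree = d},
      ∏ᶠ Q ∈ {Q : Fq[X] | Q.Monic ∧ Irreducible Q ∧ Q ∣ D},
        (Fintype.card Fq ^ Q.natDegree - 1)
    = ∑ S ∈ Sset Fq d, ∏ Q ∈ S, (Fintype.card Fq ^ Q.natDegree - 1) := by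
  have hset : {D : Fq[X] | D.Monic ∧ Squarefree D ∧ D.natDegree = d} = ↑(SF Fq d) := by
    ext D; simp [mem_SF]
  rw [hset, finsum_mem_coe_finset]
  rw [← sum_SF_eq d (fun S => ∏ Q ∈ S, (Fintype.card Fq ^ Q.natDegree - 1))]
  refine Finset.sum_congr rfl (fun D hD => ?_)
  obtain ⟨hmon, hsf, _⟩ := mem_SF.mp hD
  have h0 : D ≠ 0 := hmon.ne_zero
  have hset2 : {Q : Fq[X] | Q.Monic ∧ Irreducible Q ∧ Q ∣ D} = ↑(sfactors D) := by
    ext Q; simp [mem_sfactors h0, and_assoc]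
  rw [hset2, finprod_mem_coe_finset]

/-- If `f` is monic of positive degree, it has a monic irreducible factor, so
`sfactors f` is nonempty. -/
lemma sfactors_nonempty {f : Fq[X]} (hmon : f.Monic) (hdeg : f.natDegree ≠ 0) :
    (sfactors f).Nonempty := by
  have h0 : f ≠ 0 := hmon.ne_zero
  have hu : ¬IsUnit f := by
    intro hu
    exact hdeg (Polynomial.natDegree_eq_zero_of_isUnit hu)
  obtain ⟨i, hi, hidvd⟩ := WfDvdMonoid.exists_irreducible_factor hu h0
  have hi0 : i ≠ 0 := hi.ne_zero
  refine ⟨normalize i, (mem_sfactors h0).mpr ⟨⟨Polynomial.monic_normalize hi0, ?_⟩, ?_⟩⟩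
  · exact (normalize_associated i).symm.irreducible hi
  · exact dvd_trans (normalize_associated i).dvd hidvd

lemma sfactors_eq_empty_iff {f : Fq[X]} (hmon : f.Monic) :
    sfactors f = ∅ ↔ f.natDegree = 0 := by
  constructor
  · intro h
    by_contra hdeg
    obtain ⟨Q, hQ⟩ := sfactors_nonempty hmon hdeg
    simp [h] at hQ
  · intro h
    have : f = 1 := (Polynomial.Monic.natDegree_eq_zero hmon).mp h
    subst this
    simp [sfactors, normalizedFactors_one]

/-- The signed count of finsets of monic irreducibles of total degree `d`. -/
noncomputable def sval (Fq : Type*) [Field Fq] [Fintype Fq] [DecidableEq Fq] (d : ℕ) : ℤ :=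
  ∑ S ∈ Sset Fq d, (-1 : ℤ) ^ S.card

lemma conv (j : ℕ) :
    (∑ k ∈ Finset.range (j + 1), sval Fq k * (Fintype.card Fq : ℤ) ^ (j - k))
      = if j = 0 then 1 else 0 := by
  classical
  have hq : ∀ k, sval Fq k * (Fintype.card Fq : ℤ) ^ (j - k)
      = ∑ S ∈ Sset Fq k, ∑ m ∈ MX Fq (j - k), (-1 : ℤ) ^ S.card := by
    intro k
    rw [sval, Finset.sum_mul]
    refine Finset.sum_congr rfl (fun S _ => ?_)
    rw [Finset.sum_const, card_MX, nsmul_eq_mul]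
    push_cast
    ring
  calc (∑ k ∈ Finset.range (j + 1), sval Fq k * (Fintype.card Fq : ℤ) ^ (j - k))
      = ∑ k ∈ Finset.range (j + 1), ∑ p ∈ (Sset Fq k) ×ˢ (MX Fq (j - k)),
          (-1 : ℤ) ^ p.1.card := by
        refine Finset.sum_congr rfl (fun k _ => ?_)
        rw [hq k, Finset.sum_product]
    _ = ∑ x ∈ (Finset.range (j + 1)).sigma (fun k => (Sset Fq k) ×ˢ (MX Fq (j - k))),
          (-1 : ℤ) ^ x.2.1.card := by
        rw [Finset.sum_sigma]
    _ = ∑ x ∈ (MX Fq j).sigma (fun f => (sfactors f).powerset), (-1 : ℤ) ^ x.2.card := by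
        refine Finset.sum_nbij'
          (fun x => ⟨(∏ Q ∈ x.2.1, Q) * x.2.2, x.2.1⟩)
          (fun y => ⟨∑ Q ∈ y.2, Q.natDegree, (y.2, y.1 /ₘ (∏ Q ∈ y.2, Q))⟩)
          ?_ ?_ ?_ ?_ ?_
        · rintro ⟨k, S, m⟩ hx
          simp only [Finset.mem_sigma, Finset.mem_range, Finset.mem_product] at hx
          obtain ⟨hk, hS, hm⟩ := hx
          obtain ⟨hall, hsum⟩ := mem_Sset.mp hS
          obtain ⟨hmmon, hmdeg⟩ := mem_MX.mp hm
          have hDmon := prod_monic hall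
          have hfmon : ((∏ Q ∈ S, Q) * m).Monic := hDmon.mul hmmon
          have hf0 : (∏ Q ∈ S, Q) * m ≠ 0 := hfmon.ne_zero
          simp only [Finset.mem_sigma, Finset.mem_powerset]
          constructor
          · refine mem_MX.mpr ⟨hfmon, ?_⟩
            rw [Polynomial.natDegree_mul hDmon.ne_zero hmmon.ne_zero,
              natDegree_prod_S hall, hsum, hmdeg]
            omega
          · intro Q hQ
            refine (mem_sfactors hf0).mpr ⟨hall Q hQ, ?_⟩
            exact dvd_mul_of_dvd_left (Finset.dvd_prod_of_mem _ hQ) m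
        · rintro ⟨f, T⟩ hy
          simp only [Finset.mem_sigma, Finset.mem_powerset] at hy
          obtain ⟨hf, hT⟩ := hy
          obtain ⟨hfmon, hfdeg⟩ := mem_MX.mp hf
          have hf0 : f ≠ 0 := hfmon.ne_zero
          have hall : ∀ Q ∈ T, Q.Monic ∧ Irreducible Q :=
            fun Q hQ => ((mem_sfactors hf0).mp (hT hQ)).1
          have hDmon := prod_monic hall
          have hdvd : (∏ Q ∈ T, Q) ∣ f := prod_dvd_of_subset_sfactors hall hf0 hT
          obtain ⟨c, hc⟩ := hdvd
          have hcmon : c.Monic := hDmon.of_mul_monic_left (hc ▸ hfmon)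
          have hfc : f /ₘ (∏ Q ∈ T, Q) = c := by
            rw [hc, Polynomial.mul_divByMonic_cancel_left c hDmon]
          simp only [Finset.mem_sigma, Finset.mem_range, Finset.mem_product]
          have hdegsum : (∑ Q ∈ T, Q.natDegree) + c.natDegree = j := by
            rw [← natDegree_prod_S hall, ← Polynomial.natDegree_mul hDmon.ne_zero
              hcmon.ne_zero, ← hc, hfdeg]
          refine ⟨by omega, mem_Sset.mpr ⟨hall, rfl⟩, ?_⟩
          rw [hfc]
          exact mem_MX.mpr ⟨hcmon, by omega⟩
        · rintro ⟨k, S, m⟩ hx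
          simp only [Finset.mem_sigma, Finset.mem_range, Finset.mem_product] at hx
          obtain ⟨hk, hS, hm⟩ := hx
          obtain ⟨hall, hsum⟩ := mem_Sset.mp hS
          have hDmon := prod_monic hall
          simp only
          rw [Polynomial.mul_divByMonic_cancel_left _ hDmon, hsum]
        · rintro ⟨f, T⟩ hy
          simp only [Finset.mem_sigma, Finset.mem_powerset] at hy
          obtain ⟨hf, hT⟩ := hy
          obtain ⟨hfmon, hfdeg⟩ := mem_MX.mp hf
          have hf0 : f ≠ 0 := hfmon.ne_zero
          have hall : ∀ Q ∈ T, Q.Monic ∧ Irreducible Q :=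
            fun Q hQ => ((mem_sfactors hf0).mp (hT hQ)).1
          have hDmon := prod_monic hall
          have hdvd : (∏ Q ∈ T, Q) ∣ f := prod_dvd_of_subset_sfactors hall hf0 hT
          obtain ⟨c, hc⟩ := hdvd
          have hfc : f /ₘ (∏ Q ∈ T, Q) = c := by
            rw [hc, Polynomial.mul_divByMonic_cancel_left c hDmon]
          simp only
          rw [hfc, ← hc]
        · rintro ⟨k, S, m⟩ _
          rfl
    _ = ∑ f ∈ MX Fq j, ∑ T ∈ (sfactors f).powerset, (-1 : ℤ) ^ T.card := by
        rw [Finset.sum_sigma]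
    _ = ∑ f ∈ MX Fq j, (if sfactors f = ∅ then 1 else 0) := by
        refine Finset.sum_congr rfl (fun f _ => ?_)
        exact Finset.sum_powerset_neg_one_pow_card
    _ = if j = 0 then 1 else 0 := by
        rcases Nat.eq_zero_or_pos j with hj | hj
        · subst hj
          have h1 : MX Fq 0 = {1} := by
            ext f
            simp only [mem_MX, Finset.mem_singleton]
            constructor
            · rintro ⟨hmon, hdeg⟩
              exact (Polynomial.Monic.natDegree_eq_zero hmon).mp hdeg
            · rintro rfl
              exact ⟨monic_one, natDegree_one⟩
          rw [h1, Finset.sum_singleton,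
            if_pos ((sfactors_eq_empty_iff monic_one).mpr natDegree_one)]
          simp
        · have : ∀ f ∈ MX Fq j, (if sfactors f = ∅ then (1:ℤ) else 0) = 0 := by
            intro f hf
            obtain ⟨hmon, hdeg⟩ := mem_MX.mp hf
            rw [if_neg (fun hemp => absurd ((sfactors_eq_empty_iff hmon).mp hemp)
              (by rw [hdeg]; omega))]
          rw [Finset.sum_congr rfl this]
          simp [Nat.pos_iff_ne_zero.mp hj]

lemma sval_eq (d : ℕ) :
    sval Fq d = if d = 0 then 1 else if d = 1 then -(Fintype.card Fq : ℤ) else 0 := by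
  induction d using Nat.strong_induction_on with
  | _ d ih =>
    rcases Nat.lt_or_ge d 2 with hd | hd
    · interval_cases d
      · have h := conv (Fq := Fq) 0
        simpa using h
      · have h := conv (Fq := Fq) 1
        have h0 := conv (Fq := Fq) 0
        simp [Finset.sum_range_succ] at h h0
        simp [h0] at h
        simp
        linarith
    · have h := conv (Fq := Fq) d
      rw [if_neg (by omega), Finset.sum_range_succ] at h
      have hz : ∀ k ∈ Finset.range d, sval Fq k * (Fintype.card Fq : ℤ) ^ (d - k)
          = (if k = 0 then ((Fintype.card Fq : ℤ) ^ d) else 0)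
            + (if k = 1 then -((Fintype.card Fq : ℤ) ^ d) else 0) := by
        intro k hk
        have hk' := Finset.mem_range.mp hk
        rw [ih k hk']
        rcases Nat.eq_zero_or_pos k with rfl | hk0
        · simp
        · rcases Nat.eq_or_lt_of_le hk0 with h1 | h2
          · obtain rfl : k = 1 := h1.symm
            have hd1 : (Fintype.card Fq : ℤ) * (Fintype.card Fq : ℤ) ^ (d - 1)
                = (Fintype.card Fq : ℤ) ^ d := by
              rw [← pow_succ']; congr 1; omega
            simp only [if_neg (by norm_num : ¬(1:ℕ) = 0), zero_add, neg_mul]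
            simp [hd1]
          · rw [if_neg (by omega), if_neg (by omega), if_neg (by omega), if_neg (by omega)]
            simp
      rw [Finset.sum_congr rfl hz, Finset.sum_add_distrib, Finset.sum_ite_eq'
        (Finset.range d) 0 (fun _ => (Fintype.card Fq : ℤ) ^ d), Finset.sum_ite_eq'
        (Finset.range d) 1 (fun _ => -(Fintype.card Fq : ℤ) ^ d)] at h
      rw [if_pos (Finset.mem_range.mpr (by omega)), if_pos (Finset.mem_range.mpr (by omega))] at h
      simp only [Nat.sub_self, pow_zero, mul_one] at h
      rw [if_neg (by omega), if_neg (by omega)]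
      linarith
/-- The real-valued squarefree-weighted sum. -/
noncomputable def Breal (Fq : Type*) [Field Fq] [Fintype Fq] [DecidableEq Fq] (j : ℕ) : ℝ :=
  ∑ S ∈ Sset Fq j, ∏ Q ∈ S, ((Fintype.card Fq : ℝ) ^ Q.natDegree - 1)

lemma Sset_zero : Sset Fq 0 = {∅} := by
  ext S
  rw [mem_Sset, Finset.mem_singleton]
  constructor
  · rintro ⟨hall, hsum⟩
    by_contra hne
    obtain ⟨Q, hQ⟩ := Finset.nonempty_iff_ne_empty.mpr hne
    have h1 : 1 ≤ Q.natDegree := (hall Q hQ).2.natDegree_pos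
    have h2 : Q.natDegree ≤ ∑ P ∈ S, P.natDegree :=
      Finset.single_le_sum (fun P _ => Nat.zero_le _) hQ
    omega
  · rintro rfl
    exact ⟨by simp, by simp⟩

lemma Breal_zero : Breal Fq 0 = 1 := by
  rw [Breal, Sset_zero]
  simp

lemma coeff_prodE (c : Fq[X] → ℝ) {J j : ℕ} (hjJ : j ≤ J) :
    (∏ Q ∈ Qle Fq J, (C (c Q) * X ^ Q.natDegree + 1)).coeff j
      = ∑ S ∈ Sset Fq j, ∏ Q ∈ S, c Q := by
  classical
  rw [Finset.prod_add]
  have h1 : ∀ t ∈ (Qle Fq J).powerset,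
      ((∏ Q ∈ t, C (c Q) * X ^ Q.natDegree) * ∏ _Q ∈ (Qle Fq J) \ t, (1 : ℝ[X]))
        = C (∏ Q ∈ t, c Q) * X ^ (∑ Q ∈ t, Q.natDegree) := by
    intro t _
    rw [Finset.prod_const_one, mul_one, Finset.prod_mul_distrib, ← map_prod,
      Finset.prod_pow_eq_pow_sum]
  rw [Finset.sum_congr rfl h1, Polynomial.finset_sum_coeff]
  have h2 : ∀ t ∈ (Qle Fq J).powerset,
      (C (∏ Q ∈ t, c Q) * X ^ (∑ Q ∈ t, Q.natDegree) : ℝ[X]).coeff j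
        = if ∑ Q ∈ t, Q.natDegree = j then ∏ Q ∈ t, c Q else 0 := by
    intro t _
    rw [Polynomial.coeff_C_mul, Polynomial.coeff_X_pow]
    by_cases h : ∑ Q ∈ t, Q.natDegree = j
    · simp [h]
    · rw [if_neg h, if_neg (fun hh => h hh.symm), mul_zero]
  rw [Finset.sum_congr rfl h2, ← Finset.sum_filter]
  apply Finset.sum_congr _ (fun _ _ => rfl)
  ext S
  simp only [Finset.mem_filter, Finset.mem_powerset, mem_Sset]
  constructor
  · rintro ⟨hsub, hsum⟩
    exact ⟨fun Q hQ => (mem_Qle.mp (hsub hQ)).1, hsum⟩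
  · rintro ⟨hall, hsum⟩
    refine ⟨fun Q hQ => mem_Qle.mpr ⟨hall Q hQ, ?_⟩, hsum⟩
    have : Q.natDegree ≤ ∑ P ∈ S, P.natDegree :=
      Finset.single_le_sum (fun P _ => Nat.zero_le _) hQ
    omega

/-- The truncated generating polynomial of `Breal`. -/
noncomputable def FP (Fq : Type*) [Field Fq] [Fintype Fq] [DecidableEq Fq] (J : ℕ) : ℝ[X] :=
  ∏ Q ∈ Qle Fq J, (C ((Fintype.card Fq : ℝ) ^ Q.natDegree - 1) * X ^ Q.natDegree + 1)

/-- The truncated Euler product of the inverse zeta at `q ^ 2 u`. -/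
noncomputable def AP (Fq : Type*) [Field Fq] [Fintype Fq] [DecidableEq Fq] (J : ℕ) : ℝ[X] :=
  ∏ Q ∈ Qle Fq J, (C (-(Fintype.card Fq : ℝ) ^ Q.natDegree) * X ^ Q.natDegree + 1)

lemma coeff_FP {J j : ℕ} (hjJ : j ≤ J) : (FP Fq J).coeff j = Breal Fq j :=
  coeff_prodE _ hjJ

lemma coeff_AP {J j : ℕ} (hjJ : j ≤ J) :
    (AP Fq J).coeff j
      = if j = 0 then 1 else if j = 1 then -((Fintype.card Fq : ℝ) ^ 2) else 0 := by
  rw [AP, coeff_prodE _ hjJ]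
  have h1 : ∀ S ∈ Sset Fq j, ∏ Q ∈ S, (-(Fintype.card Fq : ℝ) ^ Q.natDegree)
      = (-1) ^ S.card * (Fintype.card Fq : ℝ) ^ j := by
    intro S hS
    obtain ⟨_, hsum⟩ := mem_Sset.mp hS
    rw [← hsum]
    simp only [neg_eq_neg_one_mul ((Fintype.card Fq : ℝ) ^ _)]
    rw [Finset.prod_mul_distrib, Finset.prod_const, Finset.prod_pow_eq_pow_sum]
  rw [Finset.sum_congr rfl h1, ← Finset.sum_mul]
  have h2 : (∑ S ∈ Sset Fq j, (-1 : ℝ) ^ S.card) = ((sval Fq j : ℤ) : ℝ) := by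
    rw [sval]
    push_cast
    rfl
  rw [h2, sval_eq]
  rcases Nat.eq_zero_or_pos j with rfl | hj0
  · simp
  · rcases Nat.eq_or_lt_of_le hj0 with h1' | h2'
    · rw [← h1', if_neg (by omega), if_pos rfl, if_neg (by omega), if_pos rfl]
      push_cast
      ring
    · rw [if_neg (by omega), if_neg (by omega), if_neg (by omega), if_neg (by omega)]
      push_cast
      simp
/-- The product polynomial. -/
noncomputable def PP (Fq : Type*) [Field Fq] [Fintype Fq] [DecidableEq Fq] (J : ℕ) : ℝ[X] :=
  AP Fq J * FP Fq J

lemma fac_id (a : ℝ) (n : ℕ) :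
    (C (-a) * X ^ n + 1) * (C (a - 1) * X ^ n + 1)
      = 1 - X ^ n - C (a ^ 2 - a) * X ^ (2 * n) := by
  have h2n : (X : ℝ[X]) ^ (2 * n) = (X ^ n) * (X ^ n) := by
    rw [two_mul, pow_add]
  simp only [map_neg, map_sub, map_pow, map_one, C_1, h2n]
  ring

lemma PP_eq (J : ℕ) :
    PP Fq J = ∏ Q ∈ Qle Fq J,
      (1 - X ^ Q.natDegree
        - C (((Fintype.card Fq : ℝ) ^ Q.natDegree) ^ 2 - (Fintype.card Fq : ℝ) ^ Q.natDegree)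
          * X ^ (2 * Q.natDegree)) := by
  rw [PP, AP, FP, ← Finset.prod_mul_distrib]
  exact Finset.prod_congr rfl (fun Q _ => fac_id _ _)

lemma coeff_PP_zero (J : ℕ) : (PP Fq J).coeff 0 = 1 := by
  rw [PP, Polynomial.mul_coeff_zero, coeff_AP (Nat.zero_le J), coeff_FP (Nat.zero_le J),
    Breal_zero]
  simp

lemma coeff_PP {J j : ℕ} (hj0 : 1 ≤ j) (hjJ : j ≤ J) :
    (PP Fq J).coeff j = Breal Fq j - (Fintype.card Fq : ℝ) ^ 2 * Breal Fq (j - 1) := by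
  rw [PP, Polynomial.coeff_mul, Finset.Nat.sum_antidiagonal_eq_sum_range_succ_mk]
  have hterm : ∀ k ∈ Finset.range (j + 1),
      (AP Fq J).coeff k * (FP Fq J).coeff (j - k)
        = (if k = 0 then (FP Fq J).coeff j else 0)
          + (if k = 1 then -((Fintype.card Fq : ℝ) ^ 2) * (FP Fq J).coeff (j - 1) else 0) := by
    intro k hk
    have hkj : k ≤ j := by
      have := Finset.mem_range.mp hk; omega
    rw [coeff_AP (hkj.trans hjJ)]
    rcases Nat.eq_zero_or_pos k with rfl | hk0
    · simp
    · rcases Nat.eq_or_lt_of_le hk0 with h1 | h2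
      · rw [← h1, if_neg (by omega), if_pos rfl, if_neg (by omega), if_pos rfl]
        ring
      · rw [if_neg (by omega), if_neg (by omega), if_neg (by omega), if_neg (by omega)]
        ring
  rw [Finset.sum_congr rfl hterm, Finset.sum_add_distrib,
    Finset.sum_ite_eq' (Finset.range (j + 1)) 0, Finset.sum_ite_eq' (Finset.range (j + 1)) 1,
    if_pos (Finset.mem_range.mpr (by omega)), if_pos (Finset.mem_range.mpr (by omega)),
    coeff_FP hjJ, coeff_FP (by omega : j - 1 ≤ J)]
  ring
lemma two_le_card : 2 ≤ Fintype.card Fq := Fintype.one_lt_card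

lemma two_le_qR : (2 : ℝ) ≤ (Fintype.card Fq : ℝ) := by
  exact_mod_cast two_le_card (Fq := Fq)

lemma geom_bound {x : ℝ} (h0 : 0 ≤ x) (h1 : x < 1) (n : ℕ) :
    ∑ i ∈ Finset.range n, x ^ i ≤ (1 - x)⁻¹ := by
  rw [geom_sum_eq (by linarith : x ≠ 1)]
  have hx1 : (0:ℝ) < 1 - x := by linarith
  have : (x ^ n - 1) / (x - 1) = (1 - x ^ n) / (1 - x) := by
    rw [div_eq_div_iff (by linarith) (by linarith)]
    ring
  rw [this, div_le_iff₀ hx1, inv_mul_cancel₀ (by linarith)]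
  have := pow_nonneg h0 n
  linarith

lemma sum_Icc_pow_le {x : ℝ} (h0 : 0 ≤ x) (h1 : x < 1) (J : ℕ) :
    ∑ n ∈ Finset.Icc 1 J, x ^ n ≤ x / (1 - x) := by
  rw [← Finset.Ico_add_one_right_eq_Icc, Finset.sum_Ico_eq_sum_range]
  have h2 : ∀ i ∈ Finset.range (J + 1 - 1), x ^ (1 + i) = x * x ^ i := by
    intro i _
    rw [pow_add, pow_one]
  rw [Finset.sum_congr rfl h2, ← Finset.mul_sum, div_eq_mul_inv]
  exact mul_le_mul_of_nonneg_left (geom_bound h0 h1 _) h0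

/-- Coefficient-domination is preserved by products. -/
lemma prod_dom {ι : Type*} (s : Finset ι) (p P : ι → ℝ[X])
    (h : ∀ i ∈ s, ∀ n, |(p i).coeff n| ≤ (P i).coeff n) :
    ∀ n, |(∏ i ∈ s, p i).coeff n| ≤ (∏ i ∈ s, P i).coeff n := by
  classical
  induction s using Finset.cons_induction with
  | empty =>
    intro n
    simp only [Finset.prod_empty, Polynomial.coeff_one]
    split_ifs <;> simp
  | cons a s ha ih =>
    intro n
    have hih := ih (fun i hi => h i (Finset.mem_cons_of_mem hi))
    have hP : ∀ m, 0 ≤ (∏ i ∈ s, P i).coeff m := fun m => le_trans (abs_nonneg _) (hih m)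
    have ha' := h a (Finset.mem_cons_self a s)
    have haP : ∀ m, 0 ≤ (P a).coeff m := fun m => le_trans (abs_nonneg _) (ha' m)
    rw [Finset.prod_cons, Finset.prod_cons, Polynomial.coeff_mul, Polynomial.coeff_mul]
    calc |∑ x ∈ Finset.HasAntidiagonal.antidiagonal n, (p a).coeff x.1 * (∏ i ∈ s, p i).coeff x.2|
        ≤ ∑ x ∈ Finset.HasAntidiagonal.antidiagonal n, |(p a).coeff x.1 * (∏ i ∈ s, p i).coeff x.2| :=
          Finset.abs_sum_le_sum_abs _ _
      _ ≤ ∑ x ∈ Finset.HasAntidiagonal.antidiagonal n, (P a).coeff x.1 * (∏ i ∈ s, P i).coeff x.2 := by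
          refine Finset.sum_le_sum (fun x _ => ?_)
          rw [abs_mul]
          exact mul_le_mul (ha' x.1) (hih x.2) (abs_nonneg _) (haP x.1)

lemma coeff_prod_nonneg {ι : Type*} (s : Finset ι) (P : ι → ℝ[X])
    (h : ∀ i ∈ s, ∀ n, 0 ≤ (P i).coeff n) :
    ∀ n, 0 ≤ (∏ i ∈ s, P i).coeff n := by
  intro n
  have := prod_dom s P P (fun i hi n => by
    rw [abs_of_nonneg (h i hi n)]) n
  exact le_trans (abs_nonneg _) this

/-- The dominating polynomial with nonnegative coefficients. -/
noncomputable def PPp (Fq : Type*) [Field Fq] [Fintype Fq] [DecidableEq Fq] (J : ℕ) : ℝ[X] :=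
  ∏ Q ∈ Qle Fq J,
    (1 + X ^ Q.natDegree
      + C (((Fintype.card Fq : ℝ) ^ Q.natDegree) ^ 2) * X ^ (2 * Q.natDegree))

lemma fac_dom {a : ℝ} (ha : 1 ≤ a) {n : ℕ} (hn : 1 ≤ n) (m : ℕ) :
    |(1 - X ^ n - C (a ^ 2 - a) * X ^ (2 * n) : ℝ[X]).coeff m|
      ≤ (1 + X ^ n + C (a ^ 2) * X ^ (2 * n) : ℝ[X]).coeff m := by
  have ha0 : (0:ℝ) ≤ a ^ 2 - a := by nlinarith
  have ha2 : (0:ℝ) ≤ a ^ 2 := by nlinarith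
  simp only [Polynomial.coeff_sub, Polynomial.coeff_add, Polynomial.coeff_one,
    Polynomial.coeff_C_mul, Polynomial.coeff_X_pow]
  split_ifs <;> rw [abs_le] <;> constructor <;> nlinarith

lemma coeff_PPp_nonneg (J : ℕ) (n : ℕ) : 0 ≤ (PPp Fq J).coeff n := by
  refine coeff_prod_nonneg _ _ (fun Q hQ m => ?_) n
  have h1 : 1 ≤ Q.natDegree := (mem_Qle.mp hQ).1.2.natDegree_pos
  have ha : (1:ℝ) ≤ (Fintype.card Fq : ℝ) ^ Q.natDegree :=
    one_le_pow₀ (by linarith [two_le_qR (Fq := Fq)])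
  have := fac_dom ha h1 m
  simp only [Polynomial.coeff_sub, Polynomial.coeff_add, Polynomial.coeff_one,
    Polynomial.coeff_C_mul, Polynomial.coeff_X_pow] at this ⊢
  exact le_trans (abs_nonneg _) this

lemma abs_coeff_PP_le (J : ℕ) (m : ℕ) : |(PP Fq J).coeff m| ≤ (PPp Fq J).coeff m := by
  rw [PP_eq]
  refine prod_dom _ _ _ (fun Q hQ n => ?_) m
  have h1 : 1 ≤ Q.natDegree := (mem_Qle.mp hQ).1.2.natDegree_pos
  have ha : (1:ℝ) ≤ (Fintype.card Fq : ℝ) ^ Q.natDegree :=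
    one_le_pow₀ (by linarith [two_le_qR (Fq := Fq)])
  exact fac_dom ha h1 n

lemma sum_xQ_le (J : ℕ) :
    ∑ Q ∈ Qle Fq J,
      ((5 / (4 * (Fintype.card Fq : ℝ) ^ 2)) ^ Q.natDegree
        + (Fintype.card Fq : ℝ) ^ (2 * Q.natDegree)
          * (5 / (4 * (Fintype.card Fq : ℝ) ^ 2)) ^ (2 * Q.natDegree)) ≤ 6 := by
  have hq := two_le_qR (Fq := Fq)
  have hq0 : (0:ℝ) < (Fintype.card Fq : ℝ) := by linarith
  set q : ℝ := (Fintype.card Fq : ℝ) with hqdef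
  set r : ℝ := 5 / (4 * q ^ 2) with hrdef
  have hr0 : 0 < r := by positivity
  have hdisj : (↑(Finset.Icc 1 J) : Set ℕ).PairwiseDisjoint (QX Fq) := by
    intro n hn m hm hnm
    simp only [Function.onFun, Finset.disjoint_left]
    intro Q hQn hQm
    exact hnm ((mem_QX.mp hQn).2.symm.trans (mem_QX.mp hQm).2)
  rw [Qle, Finset.sum_biUnion hdisj]
  have hinner : ∀ n ∈ Finset.Icc 1 J,
      ∑ Q ∈ QX Fq n, (r ^ Q.natDegree + q ^ (2 * Q.natDegree) * r ^ (2 * Q.natDegree))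
        ≤ (5/8 : ℝ) ^ n + (25/32 : ℝ) ^ n := by
    intro n hn
    have hval : ∀ Q ∈ QX Fq n,
        r ^ Q.natDegree + q ^ (2 * Q.natDegree) * r ^ (2 * Q.natDegree)
          = r ^ n + q ^ (2 * n) * r ^ (2 * n) := by
      intro Q hQ
      rw [(mem_QX.mp hQ).2]
    rw [Finset.sum_congr rfl hval, Finset.sum_const, nsmul_eq_mul]
    have hcard : ((QX Fq n).card : ℝ) ≤ q ^ n := by
      rw [hqdef]
      exact_mod_cast card_QX_le (Fq := Fq) n
    have hterm_nonneg : (0:ℝ) ≤ r ^ n + q ^ (2*n) * r ^ (2*n) := by positivity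
    calc ((QX Fq n).card : ℝ) * (r ^ n + q ^ (2*n) * r ^ (2*n))
        ≤ q ^ n * (r ^ n + q ^ (2*n) * r ^ (2*n)) :=
          mul_le_mul_of_nonneg_right hcard hterm_nonneg
      _ = (q * r) ^ n + (q ^ 3 * r ^ 2) ^ n := by
          have h3 : n + 2 * n = 3 * n := by ring
          rw [mul_add, ← mul_pow, mul_pow (q ^ 3) (r ^ 2) n, ← pow_mul q, ← pow_mul r,
            ← mul_assoc, ← pow_add, h3]
      _ ≤ (5/8 : ℝ) ^ n + (25/32 : ℝ) ^ n := by
          have h1 : q * r = 5 / (4 * q) := by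
            rw [hrdef]; field_simp
          have h2 : q ^ 3 * r ^ 2 = 25 / (16 * q) := by
            rw [hrdef]; field_simp; ring
          have h3 : 5 / (4 * q) ≤ (5/8 : ℝ) := by
            rw [div_le_div_iff₀ (by linarith) (by norm_num)]; nlinarith
          have h4 : 25 / (16 * q) ≤ (25/32 : ℝ) := by
            rw [div_le_div_iff₀ (by linarith) (by norm_num)]; nlinarith
          have h5 : (0:ℝ) ≤ 5 / (4 * q) := by positivity
          have h6 : (0:ℝ) ≤ 25 / (16 * q) := by positivity
          rw [h1, h2]
          exact add_le_add (pow_le_pow_left₀ h5 h3 n) (pow_le_pow_left₀ h6 h4 n)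
  calc ∑ n ∈ Finset.Icc 1 J, ∑ Q ∈ QX Fq n,
        (r ^ Q.natDegree + q ^ (2 * Q.natDegree) * r ^ (2 * Q.natDegree))
      ≤ ∑ n ∈ Finset.Icc 1 J, ((5/8 : ℝ) ^ n + (25/32 : ℝ) ^ n) :=
        Finset.sum_le_sum hinner
    _ = (∑ n ∈ Finset.Icc 1 J, (5/8 : ℝ) ^ n) + ∑ n ∈ Finset.Icc 1 J, (25/32 : ℝ) ^ n :=
        Finset.sum_add_distrib
    _ ≤ (5/8 : ℝ) / (1 - 5/8) + (25/32 : ℝ) / (1 - 25/32) := by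
        refine add_le_add (sum_Icc_pow_le (by norm_num) (by norm_num) J)
          (sum_Icc_pow_le (by norm_num) (by norm_num) J)
    _ ≤ 6 := by norm_num

lemma eval_PPp_le (J : ℕ) :
    (PPp Fq J).eval (5 / (4 * (Fintype.card Fq : ℝ) ^ 2)) ≤ Real.exp 6 := by
  have hq := two_le_qR (Fq := Fq)
  set q : ℝ := (Fintype.card Fq : ℝ)
  set r : ℝ := 5 / (4 * q ^ 2) with hrdef
  have hr0 : 0 < r := by positivity
  rw [PPp, Polynomial.eval_prod]
  have heval : ∀ Q ∈ Qle Fq J,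
      (1 + X ^ Q.natDegree + C ((q ^ Q.natDegree) ^ 2) * X ^ (2 * Q.natDegree) : ℝ[X]).eval r
        = 1 + (r ^ Q.natDegree + q ^ (2 * Q.natDegree) * r ^ (2 * Q.natDegree)) := by
    intro Q _
    simp [pow_mul]
    ring
  rw [Finset.prod_congr rfl heval]
  calc ∏ Q ∈ Qle Fq J, (1 + (r ^ Q.natDegree + q ^ (2*Q.natDegree) * r ^ (2*Q.natDegree)))
      ≤ ∏ Q ∈ Qle Fq J,
          Real.exp (r ^ Q.natDegree + q ^ (2*Q.natDegree) * r ^ (2*Q.natDegree)) := by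
        refine Finset.prod_le_prod (fun Q _ => by positivity) (fun Q _ => ?_)
        have := Real.add_one_le_exp
          (r ^ Q.natDegree + q ^ (2*Q.natDegree) * r ^ (2*Q.natDegree))
        linarith
    _ = Real.exp (∑ Q ∈ Qle Fq J,
          (r ^ Q.natDegree + q ^ (2*Q.natDegree) * r ^ (2*Q.natDegree))) :=
        (Real.exp_sum _ _).symm
    _ ≤ Real.exp 6 := Real.exp_le_exp.mpr (sum_xQ_le J)

lemma coeff_le_eval {p : ℝ[X]} (hp : ∀ i, 0 ≤ p.coeff i) {x : ℝ} (hx : 0 ≤ x) (n : ℕ) :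
    p.coeff n * x ^ n ≤ p.eval x := by
  rcases le_or_gt n p.natDegree with h | h
  · rw [Polynomial.eval_eq_sum_range]
    exact Finset.single_le_sum (f := fun i => p.coeff i * x ^ i)
      (fun i _ => mul_nonneg (hp i) (pow_nonneg hx i))
      (Finset.mem_range.mpr (by omega))
  · rw [Polynomial.coeff_eq_zero_of_natDegree_lt h, zero_mul]
    rw [Polynomial.eval_eq_sum_range]
    exact Finset.sum_nonneg (fun i _ => mul_nonneg (hp i) (pow_nonneg hx i))

lemma abs_coeff_PP_bound (J j : ℕ) :
    |(PP Fq J).coeff j| * (((Fintype.card Fq : ℝ) ^ 2)⁻¹) ^ j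
      ≤ Real.exp 6 * (4/5 : ℝ) ^ j := by
  have hq := two_le_qR (Fq := Fq)
  set q : ℝ := (Fintype.card Fq : ℝ)
  set r : ℝ := 5 / (4 * q ^ 2) with hrdef
  have hr0 : 0 < r := by positivity
  have hkey : (q ^ 2)⁻¹ = r * (4/5 : ℝ) := by
    rw [hrdef]
    field_simp
  rw [hkey, mul_pow, ← mul_assoc]
  refine mul_le_mul_of_nonneg_right ?_ (by positivity)
  calc |(PP Fq J).coeff j| * r ^ j ≤ (PPp Fq J).coeff j * r ^ j :=
        mul_le_mul_of_nonneg_right (abs_coeff_PP_le J j) (by positivity)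
    _ ≤ (PPp Fq J).eval r := coeff_le_eval (coeff_PPp_nonneg J) (le_of_lt hr0) j
    _ ≤ Real.exp 6 := eval_PPp_le J
/-- The Euler factor. -/
noncomputable def tfac (Fq : Type*) [Field Fq] [Fintype Fq] (Q : Fq[X]) : ℝ :=
  1 - 2 * ((Fintype.card Fq : ℝ) ^ Q.natDegree) ^ (-2 : ℝ)
    + ((Fintype.card Fq : ℝ) ^ Q.natDegree) ^ (-3 : ℝ)

lemma tfac_eq (Q : Fq[X]) :
    tfac Fq Q = 1 - 2 * (((Fintype.card Fq : ℝ) ^ Q.natDegree) ^ (2:ℕ))⁻¹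
      + (((Fintype.card Fq : ℝ) ^ Q.natDegree) ^ (3:ℕ))⁻¹ := by
  have hq := two_le_qR (Fq := Fq)
  have ha : (0:ℝ) ≤ (Fintype.card Fq : ℝ) ^ Q.natDegree := by positivity
  rw [tfac, show (-2:ℝ) = -((2:ℕ):ℝ) by norm_num, show (-3:ℝ) = -((3:ℕ):ℝ) by norm_num,
    Real.rpow_neg ha, Real.rpow_neg ha, Real.rpow_natCast, Real.rpow_natCast]

lemma eval_PP (J : ℕ) :
    (PP Fq J).eval (((Fintype.card Fq : ℝ) ^ 2)⁻¹) = ∏ Q ∈ Qle Fq J, tfac Fq Q := by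
  have hq := two_le_qR (Fq := Fq)
  set q : ℝ := (Fintype.card Fq : ℝ) with hqdef
  rw [PP_eq, Polynomial.eval_prod]
  refine Finset.prod_congr rfl (fun Q _ => ?_)
  set n : ℕ := Q.natDegree
  have hb : (0:ℝ) < q ^ n := by positivity
  have h1 : ((q ^ 2)⁻¹ : ℝ) ^ n = ((q ^ n) ^ 2)⁻¹ := by
    rw [inv_pow, ← pow_mul, ← pow_mul, Nat.mul_comm]
  have h2 : ((q ^ 2)⁻¹ : ℝ) ^ (2 * n) = ((q ^ n) ^ 4)⁻¹ := by
    rw [inv_pow, ← pow_mul, ← pow_mul]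
    congr 1
    ring
  rw [tfac_eq]
  simp only [Polynomial.eval_sub, Polynomial.eval_one, Polynomial.eval_pow,
    Polynomial.eval_X, Polynomial.eval_mul, Polynomial.eval_C, h1, h2]
  have hbne : (q ^ n : ℝ) ≠ 0 := ne_of_gt hb
  field_simp
  ring

lemma partial_sum_eq {J d : ℕ} (hd : d ≤ J) :
    ∑ j ∈ Finset.range (d + 1), (PP Fq J).coeff j * (((Fintype.card Fq : ℝ) ^ 2)⁻¹) ^ j
      = Breal Fq d * (((Fintype.card Fq : ℝ) ^ 2)⁻¹) ^ d := by
  have hq := two_le_qR (Fq := Fq)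
  set q : ℝ := (Fintype.card Fq : ℝ) with hqdef
  have hq0 : q ≠ 0 := by intro h; rw [h] at hq; norm_num at hq
  induction d with
  | zero => simp [coeff_PP_zero, Breal_zero]
  | succ d ih =>
    rw [Finset.sum_range_succ, ih (by omega), coeff_PP (by omega) hd, Nat.add_sub_cancel]
    have hstep : q ^ 2 * (((q ^ 2)⁻¹ : ℝ) ^ (d + 1)) = ((q ^ 2)⁻¹) ^ d := by
      rw [pow_succ ((q ^ 2)⁻¹) d, mul_comm (((q ^ 2)⁻¹) ^ d), ← mul_assoc,
        mul_inv_cancel₀ (by positivity : (q:ℝ) ^ 2 ≠ 0), one_mul]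
    rw [← hstep]
    ring

lemma tail_bound {x : ℝ} (h0 : 0 ≤ x) (h1 : x < 1) (m n : ℕ) :
    ∑ j ∈ Finset.Ico m n, x ^ j ≤ x ^ m * (1 - x)⁻¹ := by
  rw [Finset.sum_Ico_eq_sum_range]
  have h2 : ∀ i ∈ Finset.range (n - m), x ^ (m + i) = x ^ m * x ^ i := fun i _ => pow_add x m i
  rw [Finset.sum_congr rfl h2, ← Finset.mul_sum]
  exact mul_le_mul_of_nonneg_left (geom_bound h0 h1 _) (pow_nonneg h0 m)

lemma main_est (J : ℕ) :
    |Breal Fq J * (((Fintype.card Fq : ℝ) ^ 2)⁻¹) ^ J - ∏ Q ∈ Qle Fq J, tfac Fq Q|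
      ≤ (Real.exp 6 * 5) * (4/5 : ℝ) ^ (J + 1) := by
  have hq := two_le_qR (Fq := Fq)
  set q : ℝ := (Fintype.card Fq : ℝ) with hqdef
  set u : ℝ := ((q : ℝ) ^ 2)⁻¹ with hudef
  set N : ℕ := max ((PP Fq J).natDegree + 1) (J + 1) with hNdef
  have hN1 : (PP Fq J).natDegree < N := lt_of_lt_of_le (Nat.lt_succ_self _) (le_max_left _ _)
  have hN2 : J + 1 ≤ N := le_max_right _ _
  have heval : (PP Fq J).eval u = ∑ j ∈ Finset.range N, (PP Fq J).coeff j * u ^ j :=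
    Polynomial.eval_eq_sum_range' hN1 u
  have hsplit : Finset.range N = Finset.range (J + 1) ∪ Finset.Ico (J + 1) N := by
    ext x
    simp only [Finset.mem_range, Finset.mem_union, Finset.mem_Ico]
    omega
  have hdisj : Disjoint (Finset.range (J + 1)) (Finset.Ico (J + 1) N) := by
    rw [Finset.range_eq_Ico]
    exact Finset.Ico_disjoint_Ico_consecutive 0 (J+1) N
  rw [← eval_PP J, heval, hsplit, Finset.sum_union hdisj, partial_sum_eq (le_refl J)]
  have : Breal Fq J * u ^ J - (Breal Fq J * u ^ J + ∑ j ∈ Finset.Ico (J+1) N,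
      (PP Fq J).coeff j * u ^ j) = -(∑ j ∈ Finset.Ico (J+1) N, (PP Fq J).coeff j * u ^ j) := by
    ring
  rw [this, abs_neg]
  calc |∑ j ∈ Finset.Ico (J+1) N, (PP Fq J).coeff j * u ^ j|
      ≤ ∑ j ∈ Finset.Ico (J+1) N, |(PP Fq J).coeff j * u ^ j| :=
        Finset.abs_sum_le_sum_abs _ _
    _ ≤ ∑ j ∈ Finset.Ico (J+1) N, Real.exp 6 * (4/5 : ℝ) ^ j := by
        refine Finset.sum_le_sum (fun j _ => ?_)
        rw [abs_mul]
        have hu0 : (0:ℝ) ≤ u := by positivity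
        rw [abs_of_nonneg (pow_nonneg hu0 j)]
        exact abs_coeff_PP_bound J j
    _ = Real.exp 6 * ∑ j ∈ Finset.Ico (J+1) N, (4/5 : ℝ) ^ j := by
        rw [Finset.mul_sum]
    _ ≤ Real.exp 6 * ((4/5 : ℝ) ^ (J+1) * (1 - 4/5)⁻¹) := by
        refine mul_le_mul_of_nonneg_left (tail_bound (by norm_num) (by norm_num) _ _)
          (le_of_lt (Real.exp_pos 6))
    _ = (Real.exp 6 * 5) * (4/5 : ℝ) ^ (J + 1) := by
        norm_num
        ring
lemma one_sub_ge_exp {x : ℝ} (h0 : 0 ≤ x) (h1 : x ≤ 1/2) :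
    Real.exp (-Real.log 4 * x) ≤ 1 - x := by
  have key := convexOn_exp.2 (Set.mem_univ (0:ℝ)) (Set.mem_univ (-Real.log 4 / 2))
      (by linarith : (0:ℝ) ≤ 1 - 2*x) (by linarith : (0:ℝ) ≤ 2*x) (by ring)
  have hlog : Real.exp (-Real.log 4 / 2) = 1/2 := by
    rw [show (4:ℝ) = 2^2 by norm_num, Real.log_pow]
    push_cast
    rw [show -(2 * Real.log 2) / 2 = -Real.log 2 by ring, Real.exp_neg,
      Real.exp_log (by norm_num : (0:ℝ) < 2)]
    norm_num
  simp only [smul_eq_mul, mul_zero, zero_add, Real.exp_zero, mul_one] at key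
  rw [hlog] at key
  calc Real.exp (-Real.log 4 * x) = Real.exp (2*x * (-Real.log 4 / 2)) := by ring_nf
    _ ≤ (1 - 2*x) + 2*x*(1/2) := key
    _ = 1 - x := by ring

/-- The deficiency `1 - tfac Q`. -/
noncomputable def xq (Fq : Type*) [Field Fq] [Fintype Fq] (Q : Fq[X]) : ℝ :=
  2 * (((Fintype.card Fq : ℝ) ^ Q.natDegree) ^ (2:ℕ))⁻¹
    - (((Fintype.card Fq : ℝ) ^ Q.natDegree) ^ (3:ℕ))⁻¹

lemma a_ge_two {Q : Fq[X]} (hQ : Irreducible Q) :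
    (2:ℝ) ≤ (Fintype.card Fq : ℝ) ^ Q.natDegree := by
  have hq := two_le_qR (Fq := Fq)
  calc (2:ℝ) ≤ (Fintype.card Fq : ℝ) := hq
    _ = (Fintype.card Fq : ℝ) ^ 1 := (pow_one _).symm
    _ ≤ _ := pow_le_pow_right₀ (by linarith) hQ.natDegree_pos

lemma tfac_eq_one_sub {Q : Fq[X]} : tfac Fq Q = 1 - xq Fq Q := by
  rw [tfac_eq, xq]
  ring

lemma xq_pos {Q : Fq[X]} (hQ : Irreducible Q) : 0 < xq Fq Q := by
  have ha := a_ge_two (Fq := Fq) hQ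
  set a : ℝ := (Fintype.card Fq : ℝ) ^ Q.natDegree
  have ha0 : (0:ℝ) < a := by linarith
  have hform : xq Fq Q = (2 * a - 1) / a ^ 3 := by
    rw [xq]
    field_simp
    ring
  rw [hform]
  apply div_pos (by linarith) (by positivity)

lemma xq_le_half {Q : Fq[X]} (hQ : Irreducible Q) : xq Fq Q ≤ 1/2 := by
  have ha := a_ge_two (Fq := Fq) hQ
  set a : ℝ := (Fintype.card Fq : ℝ) ^ Q.natDegree
  have ha0 : (0:ℝ) < a := by linarith
  have hform : xq Fq Q = (2 * a - 1) / a ^ 3 := by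
    rw [xq]
    field_simp
    ring
  rw [hform, div_le_iff₀ (by positivity)]
  have h1 : 2 * a ≤ a * a := by nlinarith
  nlinarith [h1, mul_le_mul_of_nonneg_left h1 ha0.le]

lemma xq_le {Q : Fq[X]} : xq Fq Q ≤ 2 * ((Fintype.card Fq : ℝ) ^ (2 * Q.natDegree))⁻¹ := by
  have hq := two_le_qR (Fq := Fq)
  have h1 : ((Fintype.card Fq : ℝ) ^ Q.natDegree) ^ (2:ℕ) =
      (Fintype.card Fq : ℝ) ^ (2 * Q.natDegree) := by
    rw [← pow_mul, Nat.mul_comm]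
  have h3 : (0:ℝ) < ((Fintype.card Fq : ℝ) ^ Q.natDegree) ^ (3:ℕ) := by positivity
  rw [xq, h1]
  have : (0:ℝ) < (((Fintype.card Fq : ℝ) ^ Q.natDegree) ^ (3:ℕ))⁻¹ := by positivity
  linarith

lemma sum_xq_le (M : ℕ) : ∑ Q ∈ Qle Fq M, xq Fq Q ≤ 2 := by
  have hq := two_le_qR (Fq := Fq)
  have hq0 : (0:ℝ) < (Fintype.card Fq : ℝ) := by linarith
  set q : ℝ := (Fintype.card Fq : ℝ) with hqdef
  have hdisj : (↑(Finset.Icc 1 M) : Set ℕ).PairwiseDisjoint (QX Fq) := by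
    intro n hn m hm hnm
    simp only [Function.onFun, Finset.disjoint_left]
    intro Q hQn hQm
    exact hnm ((mem_QX.mp hQn).2.symm.trans (mem_QX.mp hQm).2)
  calc ∑ Q ∈ Qle Fq M, xq Fq Q
      ≤ ∑ Q ∈ Qle Fq M, 2 * (q ^ (2 * Q.natDegree))⁻¹ :=
        Finset.sum_le_sum (fun Q _ => xq_le)
    _ = ∑ n ∈ Finset.Icc 1 M, ∑ Q ∈ QX Fq n, 2 * (q ^ (2 * Q.natDegree))⁻¹ := by
        rw [Qle, Finset.sum_biUnion hdisj]
    _ ≤ ∑ n ∈ Finset.Icc 1 M, 2 * (1/2 : ℝ) ^ n := by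
        refine Finset.sum_le_sum (fun n hn => ?_)
        have hval : ∀ Q ∈ QX Fq n, 2 * (q ^ (2 * Q.natDegree))⁻¹ = 2 * (q ^ (2*n))⁻¹ := by
          intro Q hQ
          rw [(mem_QX.mp hQ).2]
        rw [Finset.sum_congr rfl hval, Finset.sum_const, nsmul_eq_mul]
        have hcard : ((QX Fq n).card : ℝ) ≤ q ^ n := by
          rw [hqdef]; exact_mod_cast card_QX_le (Fq := Fq) n
        calc ((QX Fq n).card : ℝ) * (2 * (q ^ (2*n))⁻¹)
            ≤ q ^ n * (2 * (q ^ (2*n))⁻¹) :=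
              mul_le_mul_of_nonneg_right hcard (by positivity)
          _ = 2 * (q ^ n)⁻¹ := by
              have hqn : (q:ℝ) ^ n ≠ 0 := by positivity
              rw [pow_mul]
              field_simp
              ring
          _ ≤ 2 * (1/2 : ℝ) ^ n := by
              have h2 : (1/2 : ℝ) ^ n = ((2:ℝ) ^ n)⁻¹ := by
                rw [one_div, inv_pow]
              rw [h2]
              have : (2:ℝ) ^ n ≤ q ^ n := pow_le_pow_left₀ (by norm_num) hq n
              have h2n : (0:ℝ) < (2:ℝ) ^ n := by positivity
              have hqn : (0:ℝ) < q ^ n := by positivity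
              have := inv_anti₀ h2n this
              linarith
    _ ≤ 2 * ((1/2 : ℝ) / (1 - 1/2)) := by
        rw [← Finset.mul_sum]
        exact mul_le_mul_of_nonneg_left (sum_Icc_pow_le (by norm_num) (by norm_num) M)
          (by norm_num)
    _ = 2 := by norm_num
noncomputable local instance instDecMonIrr :
    DecidablePred (fun Q : Fq[X] => Q.Monic ∧ Irreducible Q) :=
  Classical.decPred _

noncomputable def QleS (Fq : Type*) [Field Fq] [Fintype Fq] [DecidableEq Fq] (J : ℕ) :
    Finset {Q : Fq[X] // Q.Monic ∧ Irreducible Q} :=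
  (Qle Fq J).subtype (fun Q => Q.Monic ∧ Irreducible Q)

lemma mem_QleS {J : ℕ} {Q : {Q : Fq[X] // Q.Monic ∧ Irreducible Q}} :
    Q ∈ QleS Fq J ↔ Q.1.natDegree ≤ J := by
  rw [QleS, Finset.mem_subtype, mem_Qle]
  exact ⟨fun h => h.2, fun h => ⟨Q.2, h⟩⟩

lemma prod_QleS (J : ℕ) (f : Fq[X] → ℝ) :
    ∏ Q ∈ QleS Fq J, f Q.1 = ∏ Q ∈ Qle Fq J, f Q := by
  rw [QleS]
  exact Finset.prod_subtype_of_mem f (fun Q hQ => (mem_Qle.mp hQ).1)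

lemma prod_tfac_anti {s t : Finset {Q : Fq[X] // Q.Monic ∧ Irreducible Q}} (hst : s ⊆ t) :
    ∏ Q ∈ t, tfac Fq Q.1 ≤ ∏ Q ∈ s, tfac Fq Q.1 := by
  classical
  have hpos : ∀ Q : {Q : Fq[X] // Q.Monic ∧ Irreducible Q}, 0 < tfac Fq Q.1 := by
    intro Q
    rw [tfac_eq_one_sub]
    have := xq_le_half (Fq := Fq) Q.2.2
    linarith
  have hle1 : ∀ Q : {Q : Fq[X] // Q.Monic ∧ Irreducible Q}, tfac Fq Q.1 ≤ 1 := by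
    intro Q
    rw [tfac_eq_one_sub]
    have := xq_pos (Fq := Fq) Q.2.2
    linarith
  rw [← Finset.prod_sdiff hst]
  have h1 : ∏ Q ∈ t \ s, tfac Fq Q.1 ≤ 1 :=
    Finset.prod_le_one (fun Q _ => (hpos Q).le) (fun Q _ => hle1 Q)
  have h2 : (0:ℝ) ≤ ∏ Q ∈ s, tfac Fq Q.1 :=
    Finset.prod_nonneg (fun Q _ => (hpos Q).le)
  calc (∏ Q ∈ t \ s, tfac Fq Q.1) * ∏ Q ∈ s, tfac Fq Q.1
      ≤ 1 * ∏ Q ∈ s, tfac Fq Q.1 := mul_le_mul_of_nonneg_right h1 h2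
    _ = _ := one_mul _

lemma prod_tfac_lower (s : Finset {Q : Fq[X] // Q.Monic ∧ Irreducible Q}) :
    Real.exp (-Real.log 4 * 2) ≤ ∏ Q ∈ s, tfac Fq Q.1 := by
  classical
  set M : ℕ := s.sup (fun Q => Q.1.natDegree) with hM
  have hsub : s ⊆ QleS Fq M := by
    intro Q hQ
    rw [mem_QleS]
    exact Finset.le_sup (f := fun Q => Q.1.natDegree) hQ
  refine le_trans ?_ (prod_tfac_anti hsub)
  rw [prod_QleS]
  calc Real.exp (-Real.log 4 * 2)
      ≤ Real.exp (-Real.log 4 * ∑ Q ∈ Qle Fq M, xq Fq Q) := by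
        rw [Real.exp_le_exp]
        have hlog : (0:ℝ) < Real.log 4 := Real.log_pos (by norm_num)
        nlinarith [sum_xq_le (Fq := Fq) M]
    _ = Real.exp (∑ Q ∈ Qle Fq M, -Real.log 4 * xq Fq Q) := by
        rw [Finset.mul_sum]
    _ = ∏ Q ∈ Qle Fq M, Real.exp (-Real.log 4 * xq Fq Q) := Real.exp_sum _ _
    _ ≤ ∏ Q ∈ Qle Fq M, tfac Fq Q := by
        refine Finset.prod_le_prod (fun Q _ => (Real.exp_pos _).le) (fun Q hQ => ?_)
        have hirr : Irreducible Q := (mem_Qle.mp hQ).1.2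
        rw [tfac_eq_one_sub]
        exact one_sub_ge_exp (xq_pos hirr).le (xq_le_half hirr)

lemma hasProd_tfac :
    HasProd (fun Q : {Q : Fq[X] // Q.Monic ∧ Irreducible Q} => tfac Fq Q.1)
      (⨅ s : Finset {Q : Fq[X] // Q.Monic ∧ Irreducible Q}, ∏ Q ∈ s, tfac Fq Q.1) := by
  refine tendsto_atTop_ciInf (fun s t hst => prod_tfac_anti hst) ?_
  refine ⟨0, ?_⟩
  rintro y ⟨s, rfl⟩
  refine Finset.prod_nonneg (fun Q _ => ?_)
  rw [tfac_eq_one_sub]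
  have := xq_le_half (Fq := Fq) Q.2.2
  linarith

lemma tprod_tfac_pos :
    0 < ⨅ s : Finset {Q : Fq[X] // Q.Monic ∧ Irreducible Q}, ∏ Q ∈ s, tfac Fq Q.1 :=
  lt_of_lt_of_le (Real.exp_pos _) (le_ciInf prod_tfac_lower)

lemma tendsto_prod_Qle :
    Tendsto (fun J => ∏ Q ∈ Qle Fq J, tfac Fq Q) atTop
      (𝓝 (⨅ s : Finset {Q : Fq[X] // Q.Monic ∧ Irreducible Q}, ∏ Q ∈ s, tfac Fq Q.1)) := by
  have hmono : Monotone (QleS Fq) := by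
    intro a b hab Q hQ
    rw [mem_QleS] at hQ ⊢
    omega
  have hex : ∀ Q : {Q : Fq[X] // Q.Monic ∧ Irreducible Q}, ∃ J, Q ∈ QleS Fq J :=
    fun Q => ⟨Q.1.natDegree, mem_QleS.mpr le_rfl⟩
  have htend : Tendsto (QleS Fq) atTop atTop :=
    tendsto_atTop_finset_of_monotone hmono hex
  have := (hasProd_tfac (Fq := Fq)).comp htend
  refine this.congr (fun J => ?_)
  exact prod_QleS J (tfac Fq)
end AS17

open Polynomial Filter Topology

/-- Over a finite field `𝔽_q`, let `B(d) = ∑_D ∏_{Q ∣ D} (|Q| - 1)`, the sum over all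
monic squarefree `D` of degree `d`, the product over distinct monic irreducible divisors
`Q` of `D`. Then `B(d)/q^{2d}` tends, as `d → ∞`, to
`∏_Q (1 - 2|Q|^{-2} + |Q|^{-3})` over all monic irreducible `Q` (the family being
multipliable with positive product). -/
theorem stmt_17 (Fq : Type*) [Field Fq] [Fintype Fq]
    (B : ℕ → ℕ)
    (hB : ∀ d : ℕ, B d =
      ∑ᶠ D ∈ {D : Fq[X] | D.Monic ∧ Squarefree D ∧ D.natDegree = d},
        ∏ᶠ Q ∈ {Q : Fq[X] | Q.Monic ∧ Irreducible Q ∧ Q ∣ D},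
          (Fintype.card Fq ^ Q.natDegree - 1)) :
    Multipliable (fun Q : {Q : Fq[X] // Q.Monic ∧ Irreducible Q} =>
      1 - 2 * ((Fintype.card Fq : ℝ) ^ Q.1.natDegree) ^ (-2 : ℝ)
        + ((Fintype.card Fq : ℝ) ^ Q.1.natDegree) ^ (-3 : ℝ)) ∧
    0 < ∏' Q : {Q : Fq[X] // Q.Monic ∧ Irreducible Q},
      (1 - 2 * ((Fintype.card Fq : ℝ) ^ Q.1.natDegree) ^ (-2 : ℝ)
        + ((Fintype.card Fq : ℝ) ^ Q.1.natDegree) ^ (-3 : ℝ)) ∧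
    Tendsto (fun d : ℕ => (B d : ℝ) / (Fintype.card Fq : ℝ) ^ (2 * d)) atTop
      (𝓝 (∏' Q : {Q : Fq[X] // Q.Monic ∧ Irreducible Q},
        (1 - 2 * ((Fintype.card Fq : ℝ) ^ Q.1.natDegree) ^ (-2 : ℝ)
          + ((Fintype.card Fq : ℝ) ^ Q.1.natDegree) ^ (-3 : ℝ)))) := by
  classical
  have hprod := AS17.hasProd_tfac (Fq := Fq)
  set L := ⨅ s : Finset {Q : Fq[X] // Q.Monic ∧ Irreducible Q},
    ∏ Q ∈ s, AS17.tfac Fq Q.1 with hLdef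
  have hfun : (fun Q : {Q : Fq[X] // Q.Monic ∧ Irreducible Q} =>
      1 - 2 * ((Fintype.card Fq : ℝ) ^ Q.1.natDegree) ^ (-2 : ℝ)
        + ((Fintype.card Fq : ℝ) ^ Q.1.natDegree) ^ (-3 : ℝ))
      = fun Q : {Q : Fq[X] // Q.Monic ∧ Irreducible Q} => AS17.tfac Fq Q.1 := rfl
  rw [hfun]
  have htp : ∏' Q : {Q : Fq[X] // Q.Monic ∧ Irreducible Q}, AS17.tfac Fq Q.1 = L :=
    hprod.tprod_eq
  refine ⟨hprod.multipliable, by rw [htp]; exact AS17.tprod_tfac_pos, ?_⟩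
  rw [htp]
  -- identify B with Breal
  have hq := AS17.two_le_qR (Fq := Fq)
  have hBd : ∀ d, (B d : ℝ) = AS17.Breal Fq d := by
    intro d
    rw [hB d, AS17.key_B d, Nat.cast_sum, AS17.Breal]
    refine Finset.sum_congr rfl fun S _ => ?_
    rw [Nat.cast_prod]
    refine Finset.prod_congr rfl fun Q _ => ?_
    have h1 : 1 ≤ Fintype.card Fq ^ Q.natDegree :=
      Nat.one_le_pow _ _ (by have := AS17.two_le_card (Fq := Fq); omega)
    rw [Nat.cast_sub h1]
    push_cast
    ring
  have hfd : (fun d : ℕ => (B d : ℝ) / (Fintype.card Fq : ℝ) ^ (2 * d))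
      = fun d : ℕ => AS17.Breal Fq d * (((Fintype.card Fq : ℝ) ^ 2)⁻¹) ^ d := by
    funext d
    rw [hBd d, pow_mul, div_eq_mul_inv, inv_pow]
  rw [hfd]
  -- the squeeze
  have h1 := AS17.tendsto_prod_Qle (Fq := Fq)
  have h0 : Tendsto (fun J : ℕ => (4/5 : ℝ) ^ (J + 1)) atTop (𝓝 0) :=
    (tendsto_pow_atTop_nhds_zero_of_lt_one (by norm_num : (0:ℝ) ≤ 4/5)
      (by norm_num : (4/5 : ℝ) < 1)).comp (tendsto_add_atTop_nat 1)
  have h2 : Tendsto (fun J : ℕ => (Real.exp 6 * 5) * (4/5 : ℝ) ^ (J + 1)) atTop (𝓝 0) := by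
    have := h0.const_mul (Real.exp 6 * 5)
    simpa using this
  have hdiff : Tendsto (fun J : ℕ => AS17.Breal Fq J * (((Fintype.card Fq : ℝ) ^ 2)⁻¹) ^ J
      - ∏ Q ∈ AS17.Qle Fq J, AS17.tfac Fq Q) atTop (𝓝 0) := by
    refine squeeze_zero_norm (fun J => ?_) h2
    rw [Real.norm_eq_abs]
    exact AS17.main_est J
  have := hdiff.add h1
  rw [zero_add] at this
  refine this.congr (fun J => ?_)
  ring
end

section
/- Let n be an odd prime and let 𝔽_q be a finite field of characteristic 2 with gcd(q, n) = 1. With e_i(f), m(f) and the 'ordinary' condition defined as follows — for f ∈ 𝔽_q[x] monic and n-th-power-free, e_i(f) is the sum of deg Q over distinct monic irreducible Q dividing f to multiplicity exactly i; m(f) = ∑_{i=1}^{n-1} e_i(f) plus 1 if n does not divide deg f; f is 'ordinary' if either n divides deg f and e_i(f) = e_{n-i}(f) for all i, or n does not divide deg f and, with i₀ ∈ {1,…,n-1} the unique index such that deg f + i₀ ≡ 0 (mod n), e_{i₀}(f) + 1 = e_{n-i₀}(f) and e_j(f) = e_{n-j}(f) for all j ∉ {i₀, n-i₀} — then, as the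 real number X → ∞, #{f monic n-th-power-free : q^{m(f)} ≤ X and f ordinary} = O(X·(log X)^{(n-3)/2}). -/
open Polynomial Filter Topology Asymptotics

noncomputable section Stmt19Aux

open scoped Classical
open UniqueFactorizationMonoid

variable {Fq : Type*} [Field Fq]

def stmt19facSet (f : Fq[X]) (i : ℕ) : Finset (Polynomial Fq) :=
  (normalizedFactors f).toFinset.filter (fun Q => Q ^ i ∣ f ∧ ¬ Q ^ (i + 1) ∣ f)

def stmt19fpart (f : Fq[X]) (i : ℕ) : Fq[X] := ∏ Q ∈ stmt19facSet f i, Q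

lemma stmt19_monic_of_mem {f : Fq[X]} {i : ℕ} {Q : Fq[X]} (hQ : Q ∈ stmt19facSet f i) :
    Q.Monic := by
  have h1 : Q ∈ normalizedFactors f := by
    have := (Finset.mem_filter.mp hQ).1
    exact Multiset.mem_toFinset.mp this
  have h2 := normalize_normalized_factor _ h1
  have h3 : Q ≠ 0 := (irreducible_of_normalized_factor _ h1).ne_zero
  have := Polynomial.monic_normalize (p := Q) h3
  rwa [h2] at this

lemma stmt19_mem_facSet_iff {f : Fq[X]} (hf : f ≠ 0) {i : ℕ} (hi : 1 ≤ i) {Q : Fq[X]} :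
    Q ∈ stmt19facSet f i ↔ Q.Monic ∧ Irreducible Q ∧ Q ^ i ∣ f ∧ ¬ Q ^ (i + 1) ∣ f := by
  constructor
  · intro hQ
    have h1 : Q ∈ normalizedFactors f := by
      have := (Finset.mem_filter.mp hQ).1; exact Multiset.mem_toFinset.mp this
    exact ⟨stmt19_monic_of_mem hQ, irreducible_of_normalized_factor _ h1,
      ((Finset.mem_filter.mp hQ).2).1, ((Finset.mem_filter.mp hQ).2).2⟩
  · rintro ⟨hmon, hirr, hdvd, hndvd⟩
    have hQf : Q ∣ f := dvd_trans (dvd_pow_self Q (by omega : i ≠ 0)) hdvd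
    obtain ⟨R, hR, hassoc⟩ := exists_mem_normalizedFactors_of_dvd hf hirr hQf
    have hRmon : R.Monic := by
      have h2 := normalize_normalized_factor _ hR
      have h3 : R ≠ 0 := (irreducible_of_normalized_factor _ hR).ne_zero
      have := Polynomial.monic_normalize (p := R) h3
      rwa [h2] at this
    have hQR : Q = R := Polynomial.eq_of_monic_of_associated hmon hRmon hassoc
    refine Finset.mem_filter.mpr ⟨?_, hdvd, hndvd⟩
    rw [Multiset.mem_toFinset, hQR]
    exact hR

lemma stmt19_fpart_monic (f : Fq[X]) (i : ℕ) : (stmt19fpart f i).Monic :=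
  monic_prod_of_monic _ _ (fun _ hQ => stmt19_monic_of_mem hQ)

lemma stmt19_e_formula {f : Fq[X]} (hf : f ≠ 0) {i : ℕ} (hi : 1 ≤ i) :
    (∑ᶠ Q ∈ {Q : Fq[X] | Q.Monic ∧ Irreducible Q ∧ Q ^ i ∣ f ∧ ¬ Q ^ (i + 1) ∣ f},
        Q.natDegree) = (stmt19fpart f i).natDegree := by
  have hset : {Q : Fq[X] | Q.Monic ∧ Irreducible Q ∧ Q ^ i ∣ f ∧ ¬ Q ^ (i + 1) ∣ f}
      = ↑(stmt19facSet f i) := by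
    ext Q; simp [stmt19_mem_facSet_iff hf hi, and_assoc]
  rw [hset, finsum_mem_coe_finset, stmt19fpart,
    Polynomial.natDegree_prod _ _ (fun Q hQ => (stmt19_monic_of_mem hQ).ne_zero)]

lemma stmt19_dvd_fpart_iff {f : Fq[X]} (hf : f ≠ 0) {i : ℕ} (hi : 1 ≤ i) {Q : Fq[X]}
    (hmon : Q.Monic) (hirr : Irreducible Q) :
    Q ∣ stmt19fpart f i ↔ (Q ^ i ∣ f ∧ ¬ Q ^ (i + 1) ∣ f) := by
  constructor
  · intro hdvd
    obtain ⟨R, hR, hQR⟩ := hirr.prime.exists_mem_finset_dvd hdvd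
    have hRm := (stmt19_mem_facSet_iff hf hi).mp hR
    have : Q = R := Polynomial.eq_of_monic_of_associated hmon hRm.1
      (hirr.associated_of_dvd hRm.2.1 hQR)
    rw [this]; exact ⟨hRm.2.2.1, hRm.2.2.2⟩
  · intro h
    exact Finset.dvd_prod_of_mem _ ((stmt19_mem_facSet_iff hf hi).mpr ⟨hmon, hirr, h.1, h.2⟩)

lemma stmt19_exists_exact_pow {α : Type*} [CommMonoidWithZero α] {Q f : α} {n : ℕ}
    (hn2 : 2 ≤ n) (hnf : ¬ Q ^ n ∣ f) (h1 : Q ∣ f) :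
    ∃ i, 1 ≤ i ∧ i ≤ n - 1 ∧ Q ^ i ∣ f ∧ ¬ Q ^ (i + 1) ∣ f := by
  have hex : ∃ j, ¬ Q ^ j ∣ f := ⟨n, hnf⟩
  set j := Nat.find hex with hjdef
  have hj : ¬ Q ^ j ∣ f := Nat.find_spec hex
  have hjn : j ≤ n := Nat.find_min' hex hnf
  have hj0 : j ≠ 0 := by
    intro h; apply hj; rw [h, pow_zero]; exact one_dvd f
  have hj1 : j ≠ 1 := by
    intro h; apply hj; rw [h, pow_one]; exact h1
  refine ⟨j - 1, by omega, by omega, ?_, ?_⟩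
  · have := Nat.find_min hex (m := j - 1) (by omega)
    exact of_not_not this
  · have : j - 1 + 1 = j := by omega
    rw [this]; exact hj

lemma stmt19_recover {n : ℕ} (hn2 : 2 ≤ n) {f g : Fq[X]} (hfm : f.Monic) (hgm : g.Monic)
    (hfn : ∀ Q : Fq[X], Q.Monic → Irreducible Q → ¬ Q ^ n ∣ f)
    (hgn : ∀ Q : Fq[X], Q.Monic → Irreducible Q → ¬ Q ^ n ∣ g)
    (heq : ∀ i, 1 ≤ i → i ≤ n - 1 → stmt19fpart f i = stmt19fpart g i) : f = g := by
  have hf0 := hfm.ne_zero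
  have hg0 := hgm.ne_zero
  have key : ∀ Q : Fq[X], (normalizedFactors f).count Q = (normalizedFactors g).count Q := by
    intro Q
    by_cases hQ : Irreducible Q ∧ normalize Q = Q
    · obtain ⟨hirr, hnorm⟩ := hQ
      have hmon : Q.Monic := by
        have := Polynomial.monic_normalize (p := Q) hirr.ne_zero
        rwa [hnorm] at this
      by_cases hdf : Q ∣ f
      · obtain ⟨i, hi1, hi2, hdvd, hndvd⟩ :=
          stmt19_exists_exact_pow hn2 (hfn Q hmon hirr) hdf
        have h2 : Q ∣ stmt19fpart f i := (stmt19_dvd_fpart_iff hf0 hi1 hmon hirr).mpr ⟨hdvd, hndvd⟩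
        rw [heq i hi1 hi2] at h2
        obtain ⟨hdvd', hndvd'⟩ := (stmt19_dvd_fpart_iff hg0 hi1 hmon hirr).mp h2
        rw [count_normalizedFactors_eq hirr hnorm hdvd hndvd,
            count_normalizedFactors_eq hirr hnorm hdvd' hndvd']
      · have hdg : ¬ Q ∣ g := by
          intro hdg
          obtain ⟨i, hi1, hi2, hdvd, hndvd⟩ :=
            stmt19_exists_exact_pow hn2 (hgn Q hmon hirr) hdg
          have h2 : Q ∣ stmt19fpart g i :=
            (stmt19_dvd_fpart_iff hg0 hi1 hmon hirr).mpr ⟨hdvd, hndvd⟩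
          rw [← heq i hi1 hi2] at h2
          obtain ⟨hdvd', _⟩ := (stmt19_dvd_fpart_iff hf0 hi1 hmon hirr).mp h2
          exact hdf (dvd_trans (dvd_pow_self Q (by omega : i ≠ 0)) hdvd')
        rw [Multiset.count_eq_zero.mpr (fun hmem => hdf (dvd_of_mem_normalizedFactors hmem)),
            Multiset.count_eq_zero.mpr (fun hmem => hdg (dvd_of_mem_normalizedFactors hmem))]
    · rw [Multiset.count_eq_zero.mpr, Multiset.count_eq_zero.mpr]
      · intro hmem
        exact hQ ⟨irreducible_of_normalized_factor _ hmem, normalize_normalized_factor _ hmem⟩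
      · intro hmem
        exact hQ ⟨irreducible_of_normalized_factor _ hmem, normalize_normalized_factor _ hmem⟩
  have hmulteq : normalizedFactors f = normalizedFactors g := Multiset.ext.mpr key
  have h1 : Associated f g := by
    refine Associated.trans (prod_normalizedFactors hf0).symm ?_
    rw [hmulteq]; exact prod_normalizedFactors hg0
  exact Polynomial.eq_of_monic_of_associated hfm hgm h1

end Stmt19Aux
noncomputable section Stmt19Aux2
variable {Fq : Type*} [Field Fq]

/-- offset: sum of degrees of the parts before `i`, w.r.t. a degree vector `v`. -/
def stmt19off (v : ℕ → ℕ) (i : ℕ) : ℕ := ∑ j ∈ Finset.Icc 1 (i - 1), v j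

/-- concatenation polynomial of the parts `u i` (monic of degree `v i`), `i = 1, …, n-1`. -/
def stmt19conc (n : ℕ) (u : ℕ → Fq[X]) (v : ℕ → ℕ) : Fq[X] :=
  ∑ i ∈ Finset.Icc 1 (n - 1), (u i - X ^ (v i)) * X ^ (stmt19off v i)

lemma stmt19off_succ (v : ℕ → ℕ) {i : ℕ} (hi : 1 ≤ i) :
    stmt19off v (i + 1) = stmt19off v i + v i := by
  unfold stmt19off
  have h1 : i + 1 - 1 = (i - 1) + 1 := by omega
  rw [h1, Finset.sum_Icc_succ_top (by omega : 1 ≤ i - 1 + 1)]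
  have h2 : i - 1 + 1 = i := by omega
  rw [h2]

lemma stmt19off_mono (v : ℕ → ℕ) {i j : ℕ} (hij : i ≤ j) : stmt19off v i ≤ stmt19off v j :=
  Finset.sum_le_sum_of_subset (Finset.Icc_subset_Icc le_rfl (by omega))

lemma stmt19_sub_coeff_eq_zero {p : Fq[X]} (hp : p.Monic) {s : ℕ} (hs : p.natDegree ≤ s) :
    (p - X ^ p.natDegree).coeff s = 0 := by
  rw [Polynomial.coeff_sub, Polynomial.coeff_X_pow]
  rcases eq_or_lt_of_le hs with h | h
  · rw [if_pos h.symm, ← h, hp.coeff_natDegree, sub_self]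
  · rw [if_neg (by omega), Polynomial.coeff_eq_zero_of_natDegree_lt h, sub_zero]

lemma stmt19conc_coeff {n : ℕ} (u : ℕ → Fq[X]) (v : ℕ → ℕ)
    (hu : ∀ i, 1 ≤ i → i ≤ n - 1 → (u i).Monic ∧ (u i).natDegree = v i)
    {i t : ℕ} (hi1 : 1 ≤ i) (hi2 : i ≤ n - 1) (ht : t < v i) :
    (stmt19conc n u v).coeff (stmt19off v i + t) = (u i).coeff t := by
  unfold stmt19conc
  rw [Polynomial.finset_sum_coeff]
  rw [Finset.sum_eq_single i]
  · rw [Polynomial.coeff_mul_X_pow', if_pos (Nat.le_add_right _ _), Nat.add_sub_cancel_left,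
      Polynomial.coeff_sub, Polynomial.coeff_X_pow,
      if_neg (by omega : ¬ t = v i), sub_zero]
  · intro j hj hne
    rw [Finset.mem_Icc] at hj
    rw [Polynomial.coeff_mul_X_pow']
    rcases lt_or_gt_of_ne hne with hlt | hgt
    · -- j < i : the index is beyond the degree of the j-th block
      have hoff : stmt19off v j ≤ stmt19off v i := stmt19off_mono v (by omega)
      rw [if_pos (le_trans hoff (Nat.le_add_right _ _))]
      have hbig : v j ≤ stmt19off v i + t - stmt19off v j := by
        have h1 : stmt19off v j + v j = stmt19off v (j + 1) := (stmt19off_succ v hj.1).symm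
        have h2 : stmt19off v (j + 1) ≤ stmt19off v i := stmt19off_mono v (by omega)
        omega
      rw [← (hu j hj.1 hj.2).2] at hbig ⊢
      exact stmt19_sub_coeff_eq_zero (hu j hj.1 hj.2).1 hbig
    · -- j > i : block starts beyond the index
      have h1 : stmt19off v i + v i = stmt19off v (i + 1) := (stmt19off_succ v hi1).symm
      have h2 : stmt19off v (i + 1) ≤ stmt19off v j := stmt19off_mono v (by omega)
      rw [if_neg (by omega)]
  · intro h
    exact absurd (Finset.mem_Icc.mpr ⟨hi1, hi2⟩) h

/-- Two monic polynomials of the same degree with equal lower coefficients are equal. -/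
lemma stmt19_monic_ext {p r : Fq[X]} (hp : p.Monic) (hr : r.Monic)
    (hd : p.natDegree = r.natDegree) (hc : ∀ t, t < p.natDegree → p.coeff t = r.coeff t) :
    p = r := by
  ext s
  rcases lt_trichotomy s p.natDegree with h | h | h
  · exact hc s h
  · rw [h, hp.coeff_natDegree, hd, hr.coeff_natDegree]
  · rw [Polynomial.coeff_eq_zero_of_natDegree_lt h,
      Polynomial.coeff_eq_zero_of_natDegree_lt (by omega : r.natDegree < s)]

lemma stmt19_ncard_biUnion_le {α ι : Type*} (s : Finset ι) (A : ι → Set α) :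
    (⋃ i ∈ s, A i).ncard ≤ ∑ i ∈ s, (A i).ncard := by
  classical
  induction s using Finset.induction_on with
  | empty => simp
  | insert a s ha ih =>
    rw [Finset.set_biUnion_insert, Finset.sum_insert ha]
    exact le_trans (Set.ncard_union_le _ _) (by omega)

lemma stmt19_geom {q : ℕ} (hq : 2 ≤ q) (B : ℕ) :
    ∑ M ∈ Finset.range (B + 1), q ^ M ≤ 2 * q ^ B := by
  induction B with
  | zero => simp
  | succ B ih =>
    rw [Finset.sum_range_succ]
    have h1 : 2 * q ^ B ≤ q ^ (B + 1) := by
      rw [pow_succ]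
      calc 2 * q ^ B = q ^ B * 2 := by ring
        _ ≤ q ^ B * q := Nat.mul_le_mul_left _ hq
    calc ∑ M ∈ Finset.range (B + 1), q ^ M + q ^ (B + 1)
        ≤ 2 * q ^ B + q ^ (B + 1) := by omega
      _ ≤ 2 * q ^ (B + 1) := by omega

end Stmt19Aux2

/-- Let `n` be an odd prime and `𝔽_q` a finite field of characteristic 2 with
`gcd(q, n) = 1`. With `e_i(f)`, `m(f)` and the `ordinary` condition as in the paper,
the number of monic `n`-th-power-free `f ∈ 𝔽_q[x]` with `q^{m(f)} ≤ X` that are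
ordinary is `O(X (log X)^{(n-3)/2})` as `X → ∞`. -/
theorem stmt_19 (Fq : Type*) [Field Fq] [Fintype Fq] (hchar : ringChar Fq = 2)
    (n : ℕ) (hn : n.Prime) (hodd : Odd n) (hcop : Nat.Coprime (Fintype.card Fq) n)
    (e : Polynomial Fq → ℕ → ℕ)
    (he : ∀ (f : Fq[X]) (i : ℕ), e f i =
      ∑ᶠ Q ∈ {Q : Fq[X] | Q.Monic ∧ Irreducible Q ∧ Q ^ i ∣ f ∧ ¬ Q ^ (i + 1) ∣ f},
        Q.natDegree)
    (m : Polynomial Fq → ℕ)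
    (hm : ∀ f : Fq[X], m f =
      (∑ i ∈ Finset.Icc 1 (n - 1), e f i) + if n ∣ f.natDegree then 0 else 1)
    (ordinary : Polynomial Fq → Prop)
    (hord : ∀ f : Fq[X], ordinary f ↔
      ((n ∣ f.natDegree ∧ ∀ i, 1 ≤ i → i ≤ n - 1 → e f i = e f (n - i)) ∨
       (¬ n ∣ f.natDegree ∧ ∀ i₀, 1 ≤ i₀ → i₀ ≤ n - 1 → (f.natDegree + i₀) % n = 0 →
          (e f i₀ + 1 = e f (n - i₀) ∧
            ∀ j, 1 ≤ j → j ≤ n - 1 → j ≠ i₀ → j ≠ n - i₀ → e f j = e f (n - j))))) :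
    (fun X : ℝ =>
        ({f : Fq[X] | f.Monic ∧ (∀ Q : Fq[X], 0 < Q.natDegree → ¬ Q ^ n ∣ f) ∧
          (Fintype.card Fq : ℝ) ^ (m f) ≤ X ∧ ordinary f}.ncard : ℝ))
      =O[atTop] fun X : ℝ => X * Real.log X ^ ((n - 3) / 2) := by
  classical
  set q := Fintype.card Fq with hqdef
  have hq2 : 2 ≤ q := Fintype.one_lt_card
  have hn2 : 2 ≤ n := hn.two_le
  have hnne2 : n ≠ 2 := by rintro rfl; simp [Nat.odd_iff] at hodd
  have hn3 : 3 ≤ n := by omega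
  obtain ⟨halfm, hhalfm⟩ := hodd
  set half := (n - 1) / 2 with hhdef
  have hhalf1 : n = 2 * half + 1 := by omega
  set k := (n - 3) / 2 with hkdef
  have hkh : half = k + 1 := by omega
  have hhalf_pos : 1 ≤ half := by omega
  -- degrees of the parts
  have hv : ∀ f : Fq[X], f ≠ 0 → ∀ i, 1 ≤ i → e f i = (stmt19fpart f i).natDegree := by
    intro f hf i hi
    rw [he f i]
    exact stmt19_e_formula hf hi
  -- the distinguished index
  set d0 : Fq[X] → ℕ := fun f => if n ∣ f.natDegree then 0 else n - f.natDegree % n with hd0def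
  have hd0lt : ∀ f : Fq[X], d0 f < n := by
    intro f
    simp only [hd0def]
    split
    · omega
    · have := Nat.mod_lt f.natDegree (show 0 < n by omega)
      omega
  have hd0cong : ∀ f : Fq[X], ¬ n ∣ f.natDegree →
      (1 ≤ d0 f ∧ d0 f ≤ n - 1 ∧ (f.natDegree + d0 f) % n = 0) := by
    intro f hf
    have hr0 : f.natDegree % n ≠ 0 := fun h => hf (Nat.dvd_of_mod_eq_zero h)
    have hrlt : f.natDegree % n < n := Nat.mod_lt _ (by omega)
    have hd0v : d0 f = n - f.natDegree % n := by simp only [hd0def]; rw [if_neg hf]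
    refine ⟨by omega, by omega, ?_⟩
    have hdm := Nat.div_add_mod f.natDegree n
    have h1 : f.natDegree + d0 f = n * (f.natDegree / n + 1) := by
      have hmul : n * (f.natDegree / n + 1) = n * (f.natDegree / n) + n := by ring
      rw [hd0v]; omega
    rw [h1, Nat.mul_mod_right]
  have hd0zero : ∀ f : Fq[X], d0 f = 0 ↔ n ∣ f.natDegree := by
    intro f
    constructor
    · intro h
      by_contra hc
      have := hd0cong f hc
      omega
    · intro h; simp only [hd0def]; rw [if_pos h]
  -- pair relations from ordinarity
  have hpairs : ∀ f : Fq[X], ordinary f → ∀ i, 1 ≤ i → i ≤ n - 1 →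
      ((i = d0 f → e f i + 1 = e f (n - i)) ∧
       (n - i = d0 f → e f (n - i) + 1 = e f i) ∧
       (i ≠ d0 f → n - i ≠ d0 f → e f i = e f (n - i))) := by
    intro f hf i hi1 hi2
    rcases (hord f).mp hf with ⟨hdvd, hsym⟩ | ⟨hndvd, hmain⟩
    · have h0 : d0 f = 0 := (hd0zero f).mpr hdvd
      exact ⟨fun h => absurd (h.trans h0) (by omega),
        fun h => absurd (h.trans h0) (by omega), fun _ _ => hsym i hi1 hi2⟩
    · obtain ⟨hb1, hb2, hcong⟩ := hd0cong f hndvd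
      obtain ⟨hpair, hrest⟩ := hmain (d0 f) hb1 hb2 hcong
      refine ⟨?_, ?_, ?_⟩
      · intro h; rw [h]; exact hpair
      · intro h
        have hi' : i = n - d0 f := by omega
        rw [h, hi']
        exact hpair
      · intro h1 h2
        exact hrest i hi1 hi2 h1 (by omega)
  -- splitting the full sum into paired halves
  have hsplit : ∀ w : ℕ → ℕ, ∑ i ∈ Finset.Icc 1 (n - 1), w i
      = (∑ i ∈ Finset.Icc 1 half, w i) + (∑ i ∈ Finset.Icc 1 half, w (n - i)) := by
    intro w
    have hunion : Finset.Icc 1 (n - 1) = Finset.Icc 1 half ∪ Finset.Icc (half + 1) (n - 1) := by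
      ext x; simp only [Finset.mem_Icc, Finset.mem_union]; omega
    have hdisj : Disjoint (Finset.Icc 1 half) (Finset.Icc (half + 1) (n - 1)) := by
      rw [Finset.disjoint_left]
      intro a ha hb
      simp only [Finset.mem_Icc] at ha hb
      omega
    rw [hunion, Finset.sum_union hdisj]
    congr 1
    refine Finset.sum_nbij' (fun a => n - a) (fun a => n - a) ?_ ?_ ?_ ?_ ?_
    · intro a ha; simp only [Finset.mem_Icc] at ha ⊢; omega
    · intro a ha; simp only [Finset.mem_Icc] at ha ⊢; omega
    · intro a ha; simp only [Finset.mem_Icc] at ha; show n - (n - a) = a; omega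
    · intro a ha; simp only [Finset.mem_Icc] at ha; show n - (n - a) = a; omega
    · intro a ha
      simp only [Finset.mem_Icc] at ha
      have h1 : n - (n - a) = a := by omega
      rw [h1]
  -- structure of m(f) in terms of the half-sum
  have hsum_struct : ∀ f : Fq[X], ordinary f →
      m f = 2 * (∑ i ∈ Finset.Icc 1 half, e f i)
        + (if d0 f = 0 ∨ half < d0 f then 0 else 2) := by
    intro f hf
    rw [hm f, hsplit (fun i => e f i)]
    by_cases h0 : d0 f = 0
    · have hdvd : n ∣ f.natDegree := (hd0zero f).mp h0
      have hsym : ∀ i ∈ Finset.Icc 1 half, e f (n - i) = e f i := by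
        intro i hi
        simp only [Finset.mem_Icc] at hi
        exact ((hpairs f hf i hi.1 (by omega)).2.2 (by omega) (by omega)).symm
      rw [Finset.sum_congr rfl hsym, if_pos hdvd, if_pos (Or.inl h0)]
      ring
    · have hndvd : ¬ n ∣ f.natDegree := fun h => h0 ((hd0zero f).mpr h)
      obtain ⟨hb1, hb2, -⟩ := hd0cong f hndvd
      rw [if_neg hndvd]
      by_cases hc : d0 f ≤ half
      · -- the distinguished index is in the lower half
        have hterm : ∀ i ∈ Finset.Icc 1 half,
            e f (n - i) = e f i + (if i = d0 f then 1 else 0) := by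
          intro i hi
          simp only [Finset.mem_Icc] at hi
          by_cases hid : i = d0 f
          · rw [if_pos hid]
            exact ((hpairs f hf i hi.1 (by omega)).1 hid).symm
          · rw [if_neg hid, add_zero]
            exact ((hpairs f hf i hi.1 (by omega)).2.2 hid (by omega)).symm
        rw [Finset.sum_congr rfl hterm, Finset.sum_add_distrib, Finset.sum_ite_eq' _ (d0 f),
          if_pos (Finset.mem_Icc.mpr ⟨hb1, hc⟩), if_neg (by omega)]
        ring
      · -- the distinguished index is in the upper half
        push_neg at hc
        have hterm : ∀ i ∈ Finset.Icc 1 half,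
            e f (n - i) + (if i = n - d0 f then 1 else 0) = e f i := by
          intro i hi
          simp only [Finset.mem_Icc] at hi
          by_cases hid : i = n - d0 f
          · rw [if_pos hid]
            have hnd : n - i = d0 f := by omega
            exact (hpairs f hf i hi.1 (by omega)).2.1 hnd
          · rw [if_neg hid, add_zero]
            exact ((hpairs f hf i hi.1 (by omega)).2.2 (by omega) (by omega)).symm
        have hT : (∑ i ∈ Finset.Icc 1 half, e f (n - i)) + 1
            = ∑ i ∈ Finset.Icc 1 half, e f i := by
          rw [← Finset.sum_congr rfl hterm, Finset.sum_add_distrib,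
            Finset.sum_ite_eq' _ (n - d0 f), if_pos (Finset.mem_Icc.mpr ⟨by omega, by omega⟩)]
        rw [if_pos (Or.inr hc)]
        omega
  -- the e-vector is determined by m, d0 and the first (half - 1) entries
  have hdet : ∀ f g : Fq[X], ordinary f → ordinary g → m f = m g → d0 f = d0 g →
      (∀ j, 1 ≤ j → j ≤ half - 1 → e f j = e g j) →
      ∀ i, 1 ≤ i → i ≤ n - 1 → e f i = e g i := by
    intro f g hf hg hmfg hd hlowsmall
    have hSf := hsum_struct f hf
    have hSg := hsum_struct g hg
    rw [hd] at hSf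
    have hS : ∑ i ∈ Finset.Icc 1 half, e f i = ∑ i ∈ Finset.Icc 1 half, e g i := by omega
    have hlow : ∀ j, 1 ≤ j → j ≤ half → e f j = e g j := by
      intro j hj1 hj2
      rcases lt_or_eq_of_le hj2 with h | h
      · exact hlowsmall j hj1 (by omega)
      · have hS' : ∑ i ∈ Finset.Icc 1 j, e f i = ∑ i ∈ Finset.Icc 1 j, e g i := by
          rw [h]; exact hS
        have hsf : ∑ i ∈ Finset.Icc 1 j, e f i
            = (∑ i ∈ Finset.Icc 1 (j - 1), e f i) + e f j := by
          have h1 : j = (j - 1) + 1 := by omega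
          rw [h1, Finset.sum_Icc_succ_top (by omega)]
          congr 2 <;> omega
        have hsg : ∑ i ∈ Finset.Icc 1 j, e g i
            = (∑ i ∈ Finset.Icc 1 (j - 1), e g i) + e g j := by
          have h1 : j = (j - 1) + 1 := by omega
          rw [h1, Finset.sum_Icc_succ_top (by omega)]
          congr 2 <;> omega
        have hsmall : ∑ i ∈ Finset.Icc 1 (j - 1), e f i
            = ∑ i ∈ Finset.Icc 1 (j - 1), e g i := by
          refine Finset.sum_congr rfl ?_
          intro x hx
          simp only [Finset.mem_Icc] at hx
          exact hlowsmall x hx.1 (by omega)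
        omega
    intro i hi1 hi2
    rcases le_or_gt i half with h | h
    · exact hlow i hi1 h
    · set j := n - i with hjdef
      have hj1 : 1 ≤ j := by omega
      have hj2 : j ≤ half := by omega
      have hnj : n - j = i := by omega
      have hefg := hlow j hj1 hj2
      by_cases hc1 : j = d0 f
      · have h1 := (hpairs f hf j hj1 (by omega)).1 hc1
        have h2 := (hpairs g hg j hj1 (by omega)).1 (by rw [← hd]; exact hc1)
        rw [hnj] at h1 h2
        omega
      · by_cases hc2 : n - j = d0 f
        · have h1 := (hpairs f hf j hj1 (by omega)).2.1 hc2
          have h2 := (hpairs g hg j hj1 (by omega)).2.1 (by rw [← hd]; exact hc2)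
          rw [hnj] at h1 h2
          omega
        · have h1 := (hpairs f hf j hj1 (by omega)).2.2 hc1 hc2
          have h2 := (hpairs g hg j hj1 (by omega)).2.2 (by rw [← hd]; exact hc1)
            (by rw [← hd]; exact hc2)
          rw [hnj] at h1 h2
          omega
  -- the sets counted for each value of m
  set A : ℕ → Set (Fq[X]) := fun M =>
    {f : Fq[X] | f.Monic ∧ (∀ Q : Fq[X], 0 < Q.natDegree → ¬ Q ^ n ∣ f) ∧
      ordinary f ∧ m f = M} with hAdef
  -- basic bounds for members
  have hmemb : ∀ M : ℕ, ∀ f ∈ A M, ∀ i, 1 ≤ i → i ≤ n - 1 → e f i ≤ M ∧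
      (∑ i ∈ Finset.Icc 1 (n - 1), e f i) ≤ M := by
    intro M f hf i hi1 hi2
    obtain ⟨-, -, -, hM⟩ := hf
    have h1 : e f i ≤ ∑ j ∈ Finset.Icc 1 (n - 1), e f j :=
      Finset.single_le_sum (fun _ _ => Nat.zero_le _) (Finset.mem_Icc.mpr ⟨hi1, hi2⟩)
    have h2 := hm f
    omega
  -- the per-M cardinality bound via an explicit injection
  have hA : ∀ M : ℕ, (A M).Finite ∧ (A M).ncard ≤ n * ((M + 1) ^ k * q ^ M) := by
    intro M
    set Φ : Fq[X] → Fin n × (Fin k → Fin (M + 1)) × (Fin M → Fq) := fun f =>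
      (⟨d0 f, hd0lt f⟩,
       fun j => ⟨min (e f (j.val + 1)) M, by omega⟩,
       fun t => (stmt19conc n (stmt19fpart f) (fun i => e f i)).coeff t.val) with hΦdef
    have hinj : Set.InjOn Φ (A M) := by
      intro f hf g hg heqΦ
      obtain ⟨hfm, hfp, hford, hfM⟩ := hf
      obtain ⟨hgm, hgp, hgord, hgM⟩ := hg
      have hf0 : f ≠ 0 := hfm.ne_zero
      have hg0 : g ≠ 0 := hgm.ne_zero
      have h1 : d0 f = d0 g := congrArg (fun x => (Prod.fst x).val) heqΦ
      have h2 : ∀ j, 1 ≤ j → j ≤ half - 1 → e f j = e g j := by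
        intro j hj1 hj2
        have hjk : j - 1 < k := by omega
        have := congrArg (fun x => ((x.2.1 ⟨j - 1, hjk⟩ : Fin (M + 1)) : ℕ)) heqΦ
        simp only [hΦdef] at this
        have hj' : j - 1 + 1 = j := by omega
        rw [hj'] at this
        have hbf := (hmemb M f ⟨hfm, hfp, hford, hfM⟩ j hj1 (by omega)).1
        have hbg := (hmemb M g ⟨hgm, hgp, hgord, hgM⟩ j hj1 (by omega)).1
        omega
      have hevec : ∀ i, 1 ≤ i → i ≤ n - 1 → e f i = e g i :=
        hdet f g hford hgord (by omega) h1 h2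
      -- offsets agree
      have hoff : ∀ i, i ≤ n → stmt19off (fun i => e f i) i = stmt19off (fun i => e g i) i := by
        intro i hi
        unfold stmt19off
        refine Finset.sum_congr rfl ?_
        intro x hx
        simp only [Finset.mem_Icc] at hx
        exact hevec x hx.1 (by omega)
      -- total degree of concatenation is at most M
      have htot : stmt19off (fun i => e f i) n ≤ M := by
        have h3 := (hmemb M f ⟨hfm, hfp, hford, hfM⟩ 1 le_rfl (by omega)).2
        unfold stmt19off
        exact h3
      -- the parts agree
      have hparts : ∀ i, 1 ≤ i → i ≤ n - 1 → stmt19fpart f i = stmt19fpart g i := by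
        intro i hi1 hi2
        have hdf : (stmt19fpart f i).natDegree = e f i := (hv f hf0 i hi1).symm
        have hdg : (stmt19fpart g i).natDegree = e g i := (hv g hg0 i hi1).symm
        refine stmt19_monic_ext (stmt19_fpart_monic f i) (stmt19_fpart_monic g i)
          (by rw [hdf, hdg, hevec i hi1 hi2]) ?_
        intro t ht
        rw [hdf] at ht
        have hufacts : ∀ j, 1 ≤ j → j ≤ n - 1 →
            (stmt19fpart f j).Monic ∧ (stmt19fpart f j).natDegree = e f j := fun j hj1 _ =>
          ⟨stmt19_fpart_monic f j, (hv f hf0 j hj1).symm⟩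
        have hgfacts : ∀ j, 1 ≤ j → j ≤ n - 1 →
            (stmt19fpart g j).Monic ∧ (stmt19fpart g j).natDegree = e g j := fun j hj1 _ =>
          ⟨stmt19_fpart_monic g j, (hv g hg0 j hj1).symm⟩
        have hcf := stmt19conc_coeff (stmt19fpart f) (fun i => e f i) hufacts hi1 hi2 ht
        have hcg := stmt19conc_coeff (stmt19fpart g) (fun i => e g i) hgfacts hi1 hi2
          (by show t < e g i; rw [← hevec i hi1 hi2]; exact ht)
        have hidx : stmt19off (fun i => e f i) i + t < M := by
          have ha : stmt19off (fun i => e f i) i + e f i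
              = stmt19off (fun i => e f i) (i + 1) := (stmt19off_succ _ hi1).symm
          have hb : stmt19off (fun i => e f i) (i + 1) ≤ stmt19off (fun i => e f i) n :=
            stmt19off_mono _ (by omega)
          omega
        have h3 := congrArg (fun x => x.2.2 ⟨stmt19off (fun i => e f i) i + t, hidx⟩) heqΦ
        simp only [hΦdef] at h3
        rw [hcf] at h3
        rw [hoff i (by omega)] at h3
        rw [hcg] at h3
        exact h3
      -- recover equality of the polynomials
      refine stmt19_recover hn2 hfm hgm ?_ ?_ hparts
      · intro Q hQm hQi
        exact hfp Q hQi.natDegree_pos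
      · intro Q hQm hQi
        exact hgp Q hQi.natDegree_pos
    have hfin : (A M).Finite :=
      Set.Finite.of_finite_image (Set.toFinite _) hinj
    refine ⟨hfin, ?_⟩
    haveI : Nonempty (Fin n × (Fin k → Fin (M + 1)) × (Fin M → Fq)) :=
      ⟨Φ 0⟩
    have hcard := Set.ncard_le_ncard_of_injOn Φ (fun a _ => Set.mem_univ _) hinj
      Set.finite_univ
    rw [Set.ncard_univ, Nat.card_eq_fintype_card] at hcard
    calc (A M).ncard ≤ Fintype.card (Fin n × (Fin k → Fin (M + 1)) × (Fin M → Fq)) := hcard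
      _ = n * ((M + 1) ^ k * q ^ M) := by
          simp [Fintype.card_fun, hqdef]
  -- the union bound over m ≤ B
  have hcount : ∀ B : ℕ,
      ({f : Fq[X] | f.Monic ∧ (∀ Q : Fq[X], 0 < Q.natDegree → ¬ Q ^ n ∣ f) ∧
        ordinary f ∧ m f ≤ B}).Finite ∧
      ({f : Fq[X] | f.Monic ∧ (∀ Q : Fq[X], 0 < Q.natDegree → ¬ Q ^ n ∣ f) ∧
        ordinary f ∧ m f ≤ B}).ncard ≤ n * ((B + 1) ^ k * (2 * q ^ B)) := by
    intro B
    have hUeq : {f : Fq[X] | f.Monic ∧ (∀ Q : Fq[X], 0 < Q.natDegree → ¬ Q ^ n ∣ f) ∧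
        ordinary f ∧ m f ≤ B} = ⋃ M ∈ Finset.range (B + 1), A M := by
      ext f
      simp only [Set.mem_setOf_eq, Set.mem_iUnion, Finset.mem_range, hAdef]
      constructor
      · rintro ⟨ha, hb, hc, hd⟩
        exact ⟨m f, by omega, ha, hb, hc, rfl⟩
      · rintro ⟨M, hM, ha, hb, hc, hd⟩
        exact ⟨ha, hb, hc, by omega⟩
    rw [hUeq]
    constructor
    · apply Set.Finite.biUnion (Finset.finite_toSet (Finset.range (B + 1)))
      intro M _
      exact (hA M).1
    · calc (⋃ M ∈ Finset.range (B + 1), A M).ncard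
          ≤ ∑ M ∈ Finset.range (B + 1), (A M).ncard := stmt19_ncard_biUnion_le _ _
        _ ≤ ∑ M ∈ Finset.range (B + 1), n * ((B + 1) ^ k * q ^ M) := by
            refine Finset.sum_le_sum ?_
            intro M hM
            simp only [Finset.mem_range] at hM
            refine le_trans (hA M).2 ?_
            have h1 : (M + 1) ^ k ≤ (B + 1) ^ k := Nat.pow_le_pow_left (by omega) k
            exact Nat.mul_le_mul_left _ (Nat.mul_le_mul_right _ h1)
        _ = n * ((B + 1) ^ k * ∑ M ∈ Finset.range (B + 1), q ^ M) := by
            rw [← Finset.mul_sum, ← Finset.mul_sum]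
        _ ≤ n * ((B + 1) ^ k * (2 * q ^ B)) := by
            have := stmt19_geom hq2 B
            exact Nat.mul_le_mul_left _ (Nat.mul_le_mul_left _ this)
  -- final asymptotic assembly
  rw [Asymptotics.isBigO_iff]
  have hlogq : 0 < Real.log q := Real.log_pos (by exact_mod_cast hq2)
  refine ⟨(2 * n) * (2 / Real.log q) ^ k, ?_⟩
  filter_upwards [eventually_ge_atTop (max (q : ℝ) 3)] with X hX
  have hXq : (q : ℝ) ≤ X := le_trans (le_max_left _ _) hX
  have hX3 : (3 : ℝ) ≤ X := le_trans (le_max_right _ _) hX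
  have hX1 : (1 : ℝ) ≤ X := by linarith
  set N := ⌊X⌋₊ with hNdef
  have hN0 : N ≠ 0 := by
    have : 1 ≤ N := Nat.le_floor (by exact_mod_cast hX1)
    omega
  set B := Nat.log q N with hBdef
  have hTsub : {f : Fq[X] | f.Monic ∧ (∀ Q : Fq[X], 0 < Q.natDegree → ¬ Q ^ n ∣ f) ∧
      (q : ℝ) ^ (m f) ≤ X ∧ ordinary f} ⊆
      {f : Fq[X] | f.Monic ∧ (∀ Q : Fq[X], 0 < Q.natDegree → ¬ Q ^ n ∣ f) ∧
        ordinary f ∧ m f ≤ B} := by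
    rintro f ⟨h1, h2, h3, h4⟩
    refine ⟨h1, h2, h4, ?_⟩
    have h5 : (q : ℕ) ^ (m f) ≤ N := by
      refine Nat.le_floor ?_
      push_cast
      exact h3
    exact (Nat.le_log_iff_pow_le (by omega) hN0).mpr h5
  have hle1 : ({f : Fq[X] | f.Monic ∧ (∀ Q : Fq[X], 0 < Q.natDegree → ¬ Q ^ n ∣ f) ∧
      (q : ℝ) ^ (m f) ≤ X ∧ ordinary f}).ncard ≤ n * ((B + 1) ^ k * (2 * q ^ B)) :=
    le_trans (Set.ncard_le_ncard hTsub (hcount B).1) (hcount B).2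
  -- translate to the reals
  have hqBX : ((q : ℝ)) ^ B ≤ X := by
    have h1 : (q : ℕ) ^ B ≤ N := Nat.pow_log_le_self q hN0
    have h2 : (N : ℝ) ≤ X := Nat.floor_le (by linarith)
    calc ((q : ℝ)) ^ B = ((q ^ B : ℕ) : ℝ) := by push_cast; ring
      _ ≤ (N : ℝ) := by exact_mod_cast h1
      _ ≤ X := h2
  have hlogX : 0 < Real.log X := Real.log_pos (by linarith)
  have hB1 : (B : ℝ) + 1 ≤ 2 * Real.log X / Real.log q := by
    have h1 : (B : ℝ) * Real.log q ≤ Real.log X := by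
      have := Real.log_le_log (by positivity) hqBX
      rwa [Real.log_pow] at this
    have h2 : Real.log q ≤ Real.log X := Real.log_le_log (by positivity) hXq
    rw [le_div_iff₀ hlogq]
    nlinarith [h1, h2, hlogq]
  have hcast : (({f : Fq[X] | f.Monic ∧ (∀ Q : Fq[X], 0 < Q.natDegree → ¬ Q ^ n ∣ f) ∧
      (q : ℝ) ^ (m f) ≤ X ∧ ordinary f}).ncard : ℝ) ≤ (n : ℝ) * (((B : ℝ) + 1) ^ k * (2 * (q : ℝ) ^ B)) := by
    calc (({f : Fq[X] | f.Monic ∧ (∀ Q : Fq[X], 0 < Q.natDegree → ¬ Q ^ n ∣ f) ∧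
        (q : ℝ) ^ (m f) ≤ X ∧ ordinary f}).ncard : ℝ)
        ≤ ((n * ((B + 1) ^ k * (2 * q ^ B)) : ℕ) : ℝ) := by exact_mod_cast hle1
      _ = (n : ℝ) * (((B : ℝ) + 1) ^ k * (2 * (q : ℝ) ^ B)) := by push_cast; ring
  have hpow : ((B : ℝ) + 1) ^ k ≤ (2 / Real.log q) ^ k * Real.log X ^ k := by
    have h1 : ((B : ℝ) + 1) ^ k ≤ (2 * Real.log X / Real.log q) ^ k :=
      pow_le_pow_left₀ (by positivity) hB1 k
    have h2 : 2 * Real.log X / Real.log q = 2 / Real.log q * Real.log X := by ring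
    calc ((B : ℝ) + 1) ^ k ≤ (2 * Real.log X / Real.log q) ^ k := h1
      _ = (2 / Real.log q) ^ k * Real.log X ^ k := by rw [h2, mul_pow]
  rw [Real.norm_eq_abs, Real.norm_eq_abs]
  rw [abs_of_nonneg (by positivity), abs_of_nonneg (by positivity)]
  calc (({f : Fq[X] | f.Monic ∧ (∀ Q : Fq[X], 0 < Q.natDegree → ¬ Q ^ n ∣ f) ∧
      (q : ℝ) ^ (m f) ≤ X ∧ ordinary f}).ncard : ℝ)
      ≤ (n : ℝ) * (((B : ℝ) + 1) ^ k * (2 * (q : ℝ) ^ B)) := hcast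
    _ ≤ (n : ℝ) * (((2 / Real.log q) ^ k * Real.log X ^ k) * (2 * X)) := by
        refine mul_le_mul_of_nonneg_left ?_ (by positivity)
        refine mul_le_mul hpow (by nlinarith [hqBX]) (by positivity) (by positivity)
    _ = (2 * n) * (2 / Real.log q) ^ k * (X * Real.log X ^ k) := by ring
end
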